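/- arXiv:1610.06634 — 6 statements merged into one kernel-verified Lean document; each statement's English description precedes it below -/
import Mathlib

section
/- Let v be a valuation on a field K with formally real residue field. For any sum of squares c ∈ K×, the value v(c) is divisible by 2 in the value group. -/
open IsLocalRing

private lemma isSumSq_fin_rep {K : Type} [Field K] {c : K} (h : IsSumSq c) :
    ∃ (n : ℕ) (f : Fin n → K), c = ∑ i, f i ^ 2 := by
  induction h with
  | zero => exact ⟨0, fun i => 0, by simp⟩
  | sq_add a pS ih =>
    obtain ⟨n, f, hf⟩ := ih
    exact ⟨n + 1, Fin.cons a f, by rw [Fin.sum_univ_succ]; simp [hf, sq]⟩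

private lemma isUnit_iff_val_eq_one {K Γ₀ : Type} [Field K]
    [LinearOrderedCommGroupWithZero Γ₀] (v : Valuation K Γ₀)
    (x : v.valuationSubring) : IsUnit x ↔ v (x : K) = 1 := by
  constructor
  · rintro ⟨u, rfl⟩
    have h1 : v ((u : v.valuationSubring) : K) ≤ 1 := (u : v.valuationSubring).2
    have h2 : v (((u⁻¹ : _) : v.valuationSubring) : K) ≤ 1 := ((u⁻¹ : _) : v.valuationSubring).2
    have hmul : v ((u : v.valuationSubring) : K) * v (((u⁻¹ : _) : v.valuationSubring) : K) = 1 := by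
      rw [← map_mul]
      have : ((u : v.valuationSubring) : K) * (((u⁻¹ : _) : v.valuationSubring) : K)
          = ((u * u⁻¹ : v.valuationSubringˣ) : v.valuationSubring) := by push_cast; ring
      rw [this, mul_inv_cancel]; simp
    rcases lt_or_eq_of_le h1 with h | h
    · exfalso
      have : v ((u : v.valuationSubring) : K) * v (((u⁻¹ : _) : v.valuationSubring) : K) < 1 := by
        calc v ((u : v.valuationSubring) : K) * v (((u⁻¹ : _) : v.valuationSubring) : K)
            ≤ v ((u : v.valuationSubring) : K) * 1 := mul_le_mul_right h2 _
          _ < 1 := by simpa using h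
      exact absurd hmul this.ne
    · exact h
  · intro h
    have hx0 : (x : K) ≠ 0 := by
      intro h0; rw [h0, map_zero] at h; exact zero_ne_one h
    have hinv : (x : K)⁻¹ ∈ v.valuationSubring := by
      rw [Valuation.mem_valuationSubring_iff, map_inv₀, h, inv_one]
    refine IsUnit.of_mul_eq_one (a := x) ⟨(x : K)⁻¹, hinv⟩ ?_
    ext; push_cast; field_simp

private lemma mem_maxIdeal_iff_lt_one {K Γ₀ : Type} [Field K]
    [LinearOrderedCommGroupWithZero Γ₀] (v : Valuation K Γ₀)
    (x : v.valuationSubring) : x ∈ maximalIdeal v.valuationSubring ↔ v (x : K) < 1 := by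
  rw [IsLocalRing.mem_maximalIdeal, mem_nonunits_iff, isUnit_iff_val_eq_one]
  exact ⟨fun h => lt_of_le_of_ne x.2 h, fun h => h.ne⟩

private lemma key_lemma {K Γ₀ : Type} [Field K] [LinearOrderedCommGroupWithZero Γ₀]
    (v : Valuation K Γ₀)
    (hres : ¬ IsSumSq (-1 : IsLocalRing.ResidueField v.valuationSubring))
    {ι : Type} (s : Finset ι) (a : ι → K) (hne : ∑ i ∈ s, a i ^ 2 ≠ 0) :
    ∃ i ∈ s, (∀ j ∈ s, v (a j) ≤ v (a i)) ∧ v (∑ i ∈ s, a i ^ 2) = v (a i) ^ 2 := by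
  classical
  have hsne : s.Nonempty := by
    rcases s.eq_empty_or_nonempty with rfl | h
    · simp at hne
    · exact h
  obtain ⟨i, hi, hmax⟩ := s.exists_max_image (fun j => v (a j)) hsne
  have hai : a i ≠ 0 := by
    intro h0
    apply hne
    refine Finset.sum_eq_zero fun j hj => ?_
    have := hmax j hj
    rw [h0, map_zero, le_zero_iff] at this
    rw [(Valuation.zero_iff v).mp this, zero_pow two_ne_zero]
  have hvai : v (a i) ≠ 0 := fun h => hai ((Valuation.zero_iff v).mp h)
  -- the normalized elements
  have hmem : ∀ j ∈ s, a j / a i ∈ v.valuationSubring := by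
    intro j hj
    rw [Valuation.mem_valuationSubring_iff, map_div₀]
    exact div_le_one_of_le₀ (hmax j hj) zero_le'
  set b : ι → v.valuationSubring := fun j =>
    if hj : j ∈ s then ⟨a j / a i, hmem j hj⟩ else 0 with hb
  have hbcoe : ∀ j ∈ s, ((b j : K)) = a j / a i := by
    intro j hj; simp [hb, hj]
  set S : v.valuationSubring := ∑ j ∈ s, (b j) ^ 2 with hS
  have hScoe : (S : K) = (∑ j ∈ s, a j ^ 2) / (a i) ^ 2 := by
    push_cast [hS]
    rw [Finset.sum_div]
    refine Finset.sum_congr rfl fun j hj => ?_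
    rw [hbcoe j hj, div_pow]
  have hc_eq : (∑ j ∈ s, a j ^ 2) = (a i) ^ 2 * (S : K) := by
    rw [hScoe, mul_div_cancel₀]
    exact pow_ne_zero _ hai
  have hvS_le : v (S : K) ≤ 1 := S.2
  have hvS : v (S : K) = 1 := by
    by_contra hne1
    have hlt : S ∈ maximalIdeal v.valuationSubring := by
      rw [mem_maxIdeal_iff_lt_one]
      exact lt_of_le_of_ne hvS_le hne1
    -- pass to residue field
    have hres0 : residue v.valuationSubring S = 0 :=
      (Ideal.Quotient.eq_zero_iff_mem).mpr hlt
    have hbi : b i = 1 := by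
      ext; rw [hbcoe i hi, div_self hai]; simp
    have hsplit : (0 : ResidueField v.valuationSubring)
        = 1 + ∑ j ∈ s.erase i, (residue v.valuationSubring (b j)) ^ 2 := by
      rw [← hres0, hS, map_sum]
      rw [← Finset.add_sum_erase _ _ hi]
      rw [map_pow, hbi, map_one, one_pow]
      exact congrArg _ (Finset.sum_congr rfl fun j _ => by rw [map_pow])
    have hneg1 : (-1 : ResidueField v.valuationSubring)
        = ∑ j ∈ s.erase i, (residue v.valuationSubring (b j)) ^ 2 := by
      linear_combination hsplit
    apply hres
    rw [hneg1]
    have := IsSumSq.sum_mul_self (s.erase i)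
      (fun j => residue v.valuationSubring (b j))
    simpa [pow_two] using this
  rw [hc_eq]
  refine ⟨i, hi, hmax, ?_⟩
  rw [map_mul, hvS, mul_one, map_pow]

/-- If `v` is a valuation on a field `K` whose residue field is formally real,
then the value of any nonzero sum of squares `c ∈ K` is divisible by `2` in the
value group; in fact `v(c) = 2·minᵢ v(aᵢ)` for any representation
`c = a₁² + ⋯ + a_k²` (stated multiplicatively: `v c` is a square, equal to the
square of the maximal value `v (aᵢ)`). -/
theorem valuation_sum_of_squares_even
    {K Γ₀ : Type} [Field K] [LinearOrderedCommGroupWithZero Γ₀]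
    (v : Valuation K Γ₀)
    (hres : ¬ IsSumSq (-1 : IsLocalRing.ResidueField v.valuationSubring))
    {c : K} (hc : c ≠ 0) (hsum : IsSumSq c) :
    (∃ γ : Γ₀, v c = γ ^ 2) ∧
    ∀ (ι : Type) (s : Finset ι) (a : ι → K), c = ∑ i ∈ s, a i ^ 2 →
      ∃ i ∈ s, (∀ j ∈ s, v (a j) ≤ v (a i)) ∧ v c = v (a i) ^ 2 := by
  constructor
  · obtain ⟨n, f, hf⟩ := isSumSq_fin_rep hsum
    have := key_lemma v hres Finset.univ f (by rw [← hf]; exact hc)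
    obtain ⟨i, _, _, hv⟩ := this
    exact ⟨v (f i), by rw [hf]; exact hv⟩
  · intro ι s a ha
    subst ha
    exact key_lemma v hres s a hc
end

section
/- Let B|A be a finite extension of integral domains whose fraction field extension L|K is separable, let c ∈ L×, and let I be an A-submodule of L spanning L over K. Define β(a,b) = Tr_{L|K}(abc). Then β restricts to a unimodular A-bilinear form on I if and only if c·I equals the complementary module I' = { x ∈ L : Tr_{L|K}(x·I) ⊆ A }. -/
/-- If the trace pairing of `w` against everything in a `K`-spanning submodule `I`
vanishes, then `w = 0`. -/
private theorem trace_zero_of_span_aux {A K L : Type} [CommRing A] [Field K] [Field L]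
    [Algebra K L] [Algebra A L] [FiniteDimensional K L] [Algebra.IsSeparable K L]
    (I : Submodule A L) (hspan : Submodule.span K (I : Set L) = ⊤)
    (w : L) (hw : ∀ y ∈ I, Algebra.trace K L (w * y) = 0) : w = 0 := by
  have h1 : (I : Set L) ⊆
      (LinearMap.ker ((Algebra.trace K L).comp (LinearMap.mulLeft K w)) : Set L) := by
    intro y hy
    simpa using hw y hy
  have h2 : Submodule.span K (I : Set L) ≤
      LinearMap.ker ((Algebra.trace K L).comp (LinearMap.mulLeft K w)) :=
    Submodule.span_le.mpr h1
  rw [hspan, top_le_iff] at h2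
  apply (traceForm_nondegenerate K L).1 w
  intro u
  have hu : u ∈ LinearMap.ker ((Algebra.trace K L).comp (LinearMap.mulLeft K w)) := by
    rw [h2]; trivial
  simpa [Algebra.traceForm_apply] using LinearMap.mem_ker.mp hu

/-- Every `A`-linear functional on a `K`-spanning submodule `I ⊆ L` is represented by
trace pairing against some element `z ∈ L`. -/
private theorem exists_trace_dual_aux {A K L : Type} [CommRing A] [IsDomain A]
    [Field K] [Field L] [Algebra A K] [IsFractionRing A K]
    [Algebra K L] [Algebra A L] [IsScalarTower A K L]
    [FiniteDimensional K L] [Algebra.IsSeparable K L]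
    (I : Submodule A L) (hspan : Submodule.span K (I : Set L) = ⊤)
    (f : ↥I →ₗ[A] A) :
    ∃ z : L, ∀ y : ↥I, Algebra.trace K L (z * (y : L)) = algebraMap A K (f y) := by
  obtain ⟨s, hsI, hs, hli⟩ := exists_linearIndependent K (I : Set L)
  have hb : ⊤ ≤ Submodule.span K (Set.range ((↑) : s → L)) := by
    rw [Subtype.range_coe, hs, hspan]
  let b : Module.Basis s K L := Module.Basis.mk hli hb
  haveI : Fintype s := FiniteDimensional.fintypeBasisIndex b
  have hbI : ∀ i : s, (b i : L) ∈ I := fun i => by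
    rw [Module.Basis.mk_apply]; exact hsI i.2
  let g : s → ↥I := fun i => ⟨b i, hbI i⟩
  let F : L →ₗ[K] K := b.constr K (fun i => algebraMap A K (f (g i)))
  refine ⟨((Algebra.traceForm K L).toDual (traceForm_nondegenerate K L)).symm F, ?_⟩
  intro y
  have hz : ∀ u : L,
      Algebra.trace K L
        (((Algebra.traceForm K L).toDual
          (traceForm_nondegenerate K L)).symm F * u) = F u := fun u => by
    simpa only [Algebra.traceForm_apply] using
      LinearMap.BilinForm.apply_toDual_symm_apply
        (B := Algebra.traceForm K L) (hB := traceForm_nondegenerate K L) F u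
  rw [hz]
  -- it remains to show `F y = algebraMap A K (f y)` for `y : ↥I`
  obtain ⟨d, hd⟩ := IsLocalization.exist_integer_multiples_of_finite (nonZeroDivisors A)
    (fun i : s => b.repr (y : L) i)
  choose a ha using hd
  have hF : ∀ i : s, F (b i) = algebraMap A K (f (g i)) := fun i =>
    Module.Basis.constr_basis b K _ i
  -- the element `∑ aᵢ • g i : ↥I` equals `d • y`
  have hcoe : ((∑ i : s, a i • g i : ↥I) : L) = (d : A) • (y : L) := by
    rw [Submodule.coe_sum]
    have : ∀ i : s, ((a i • g i : ↥I) : L) = (d : A) • (b.repr (y : L) i • b i) := by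
      intro i
      rw [Submodule.coe_smul]
      show a i • (b i : L) = (d : A) • (b.repr (y : L) i • b i)
      rw [← smul_assoc, ← ha i, ← algebraMap_smul K (a i) (b i)]
    rw [Finset.sum_congr rfl (fun i _ => this i), ← Finset.smul_sum, b.sum_repr]
  have hsum : (∑ i : s, a i • g i : ↥I) = (d : A) • y := by
    apply Subtype.ext
    rw [hcoe]
    rfl
  have hfa : algebraMap A K ((d : A) * f y) = ∑ i : s, algebraMap A K (a i * f (g i)) := by
    rw [← map_sum]
    congr 1
    have : (d : A) * f y = f ((d : A) • y) := by rw [map_smul]; rfl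
    rw [this, ← hsum, map_sum]
    simp [smul_eq_mul]
  -- expand `F y` via the basis
  have hFy : algebraMap A K (d : A) * F y = ∑ i : s, algebraMap A K (a i * f (g i)) := by
    conv_lhs => rw [← b.sum_repr (y : L)]
    rw [map_sum, Finset.mul_sum]
    refine Finset.sum_congr rfl fun i _ => ?_
    rw [map_smul, smul_eq_mul, hF i, map_mul, ha i, Algebra.smul_def, mul_assoc]
  have hdne : algebraMap A K (d : A) ≠ 0 := by
    have := IsFractionRing.injective A K
    intro h0
    exact nonZeroDivisors.coe_ne_zero d (this (by rw [h0, map_zero]))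
  have : algebraMap A K (d : A) * F y = algebraMap A K (d : A) * algebraMap A K (f y) := by
    rw [hFy, ← hfa, map_mul]
  exact mul_left_cancel₀ hdne this

/-- **Scaled trace forms and the complementary module.**  Let `B|A` be a finite
extension of integral domains with separable fraction field extension `L|K`,
`c ∈ L^×`, and `I` an `A`-submodule of `L` spanning `L` over `K`.  The scaled
trace form `β(a,b) = Tr_{L|K}(abc)` restricts to a unimodular `A`-bilinear form
on `I` (i.e. it takes values in `A` on `I × I` and the induced map
`I → Hom_A(I,A)` is bijective) if and only if `c·I` equals the complementary
module `I' = {x ∈ L : Tr_{L|K}(x·I) ⊆ A}`. -/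
theorem scaled_trace_form_unimodular_iff
    {A B K L : Type}
    [CommRing A] [IsDomain A] [CommRing B] [IsDomain B]
    [Field K] [Field L] [Algebra A K] [IsFractionRing A K]
    [Algebra B L] [IsFractionRing B L]
    [Algebra A B] [Module.Finite A B]
    [Algebra K L] [Algebra A L] [IsScalarTower A K L] [IsScalarTower A B L]
    [FiniteDimensional K L] [Algebra.IsSeparable K L]
    (c : L) (hc : c ≠ 0)
    (I : Submodule A L) (hspan : Submodule.span K (I : Set L) = ⊤) :
    (∃ β₀ : ↥I →ₗ[A] (↥I →ₗ[A] A),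
        (∀ x y : ↥I,
          algebraMap A K (β₀ x y) = Algebra.trace K L ((x : L) * (y : L) * c)) ∧
        Function.Bijective β₀) ↔
      ∀ x : L, (∃ y ∈ I, c * y = x) ↔
        ∀ y ∈ I, Algebra.trace K L (x * y) ∈ (algebraMap A K).range := by
  have he : Function.Injective (algebraMap A K) := IsFractionRing.injective A K
  constructor
  · rintro ⟨β₀, hβ, hbij⟩ x
    constructor
    · rintro ⟨y, hy, rfl⟩ y' hy'
      refine ⟨β₀ ⟨y, hy⟩ ⟨y', hy'⟩, ?_⟩
      rw [hβ ⟨y, hy⟩ ⟨y', hy'⟩]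
      congr 1
      ring
    · intro hx
      have hex : ∀ y : ↥I, ∃ a : A,
          algebraMap A K a = Algebra.trace K L (x * (y : L)) := fun y => hx y y.2
      choose t ht using hex
      have hadd : ∀ y y' : ↥I, t (y + y') = t y + t y' := by
        intro y y'
        apply he
        rw [map_add, ht, ht, ht, Submodule.coe_add, mul_add, map_add]
      have hsmul : ∀ (a : A) (y : ↥I), t (a • y) = a * t y := by
        intro a y
        apply he
        rw [map_mul, ht, ht, Submodule.coe_smul, mul_smul_comm,
          LinearMap.map_smul_of_tower, Algebra.smul_def]
      let f : ↥I →ₗ[A] A :=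
        { toFun := t
          map_add' := hadd
          map_smul' := hsmul }
      obtain ⟨z, hz⟩ := hbij.2 f
      have hw : ∀ y ∈ I, Algebra.trace K L ((c * (z : L) - x) * y) = 0 := by
        intro y hy
        have h1 : algebraMap A K (β₀ z ⟨y, hy⟩) =
            Algebra.trace K L ((z : L) * y * c) := hβ z ⟨y, hy⟩
        have h2 : algebraMap A K (f ⟨y, hy⟩) =
            Algebra.trace K L (x * y) := ht ⟨y, hy⟩
        rw [hz] at h1
        have h3 : Algebra.trace K L ((c * (z : L)) * y) = Algebra.trace K L (x * y) := by
          rw [show c * (z : L) * y = (z : L) * y * c by ring, ← h1, h2]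
        rw [sub_mul, map_sub, h3, sub_self]
      have := trace_zero_of_span_aux I hspan _ hw
      exact ⟨z, z.2, sub_eq_zero.mp this⟩
  · intro h
    have hex : ∀ x y : ↥I, ∃ a : A,
        algebraMap A K a = Algebra.trace K L ((x : L) * (y : L) * c) := by
      intro x y
      obtain ⟨a, ha⟩ := (h (c * (y : L))).mp ⟨y, y.2, rfl⟩ (x : L) x.2
      refine ⟨a, ?_⟩
      rw [ha]
      congr 1
      ring
    choose t ht using hex
    have H1 : ∀ x x' y : ↥I, t (x + x') y = t x y + t x' y := by
      intro x x' y
      apply he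
      rw [map_add, ht, ht, ht, Submodule.coe_add, add_mul, add_mul, map_add]
    have H2 : ∀ (a : A) (x y : ↥I), t (a • x) y = a • t x y := by
      intro a x y
      apply he
      rw [smul_eq_mul, map_mul, ht, ht, Submodule.coe_smul, smul_mul_assoc,
        smul_mul_assoc, LinearMap.map_smul_of_tower, Algebra.smul_def]
    have H3 : ∀ x y y' : ↥I, t x (y + y') = t x y + t x y' := by
      intro x y y'
      apply he
      rw [map_add, ht, ht, ht, Submodule.coe_add, mul_add, add_mul, map_add]
    have H4 : ∀ (a : A) (x y : ↥I), t x (a • y) = a • t x y := by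
      intro a x y
      apply he
      rw [smul_eq_mul, map_mul, ht, ht, Submodule.coe_smul, mul_smul_comm,
        smul_mul_assoc, LinearMap.map_smul_of_tower, Algebra.smul_def]
    let β₀ : ↥I →ₗ[A] (↥I →ₗ[A] A) := LinearMap.mk₂ A t H1 H2 H3 H4
    have hβ : ∀ x y : ↥I, algebraMap A K (β₀ x y) =
        Algebra.trace K L ((x : L) * (y : L) * c) := fun x y => ht x y
    refine ⟨β₀, hβ, ?_, ?_⟩
    · -- injective
      rw [injective_iff_map_eq_zero]
      intro x hx
      have hw : ∀ y ∈ I, Algebra.trace K L (((x : L) * c) * y) = 0 := by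
        intro y hy
        have h1 : β₀ x ⟨y, hy⟩ = 0 := by rw [hx]; rfl
        have := hβ x ⟨y, hy⟩
        rw [h1, map_zero] at this
        rw [show (x : L) * c * y = (x : L) * y * c by ring, ← this]
      have := trace_zero_of_span_aux I hspan _ hw
      have hx0 : (x : L) = 0 := by
        rcases mul_eq_zero.mp this with h' | h'
        · exact h'
        · exact absurd h' hc
      exact Subtype.ext hx0
    · -- surjective
      intro f
      obtain ⟨z, hz⟩ := exists_trace_dual_aux I hspan f
      obtain ⟨y₀, hy₀, hcy₀⟩ := (h z).mpr (fun y hy => ⟨f ⟨y, hy⟩, (hz ⟨y, hy⟩).symm⟩)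
      refine ⟨⟨y₀, hy₀⟩, ?_⟩
      apply LinearMap.ext
      intro y
      apply he
      rw [hβ ⟨y₀, hy₀⟩ y, show (y₀ : L) * (y : L) * c = (c * y₀) * y by ring, hcy₀, hz]
end

section
/- Let B|A be a finite extension of Dedekind domains with separable fraction field extension L|K, c ∈ L×, and I a nonzero fractional B-ideal. The scaled trace form β(a,b) = Tr_{L|K}(abc) restricts to a unimodular A-bilinear form on I if and only if c·I² = Δ(B|A), the codifferent of B over A. -/
open nonZeroDivisors

/-- **Unimodular scaled trace forms on fractional ideals over Dedekind domains.**
Let `B|A` be a finite extension of Dedekind domains with separable fraction field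
extension `L|K`, `c ∈ L^×` and `I` a nonzero fractional `B`-ideal.  The scaled
trace form `β(a,b) = Tr_{L|K}(abc)` restricts to a unimodular `A`-bilinear form
on `I` if and only if `c·I² = Δ(B|A)`, the codifferent
`{x ∈ L : Tr_{L|K}(xB) ⊆ A}` of `B` over `A`. -/
theorem scaled_trace_form_unimodular_iff_codifferent
    {A B K L : Type}
    [CommRing A] [IsDomain A] [IsDedekindDomain A]
    [CommRing B] [IsDomain B] [IsDedekindDomain B]
    [Field K] [Field L] [Algebra A K] [IsFractionRing A K]
    [Algebra B L] [IsFractionRing B L]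
    [Algebra A B] [Module.Finite A B]
    [Algebra K L] [Algebra A L] [IsScalarTower A K L] [IsScalarTower A B L]
    [FiniteDimensional K L] [Algebra.IsSeparable K L]
    (c : L) (hc : c ≠ 0)
    (I : FractionalIdeal B⁰ L) (hI : I ≠ 0) :
    (∃ β₀ : ↥(I : Submodule B L) →ₗ[A] (↥(I : Submodule B L) →ₗ[A] A),
        (∀ x y : ↥(I : Submodule B L),
          algebraMap A K (β₀ x y) = Algebra.trace K L ((x : L) * (y : L) * c)) ∧
        Function.Bijective β₀) ↔
      ∀ x : L,
        x ∈ (FractionalIdeal.spanSingleton B⁰ c * I ^ 2 : FractionalIdeal B⁰ L) ↔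
        ∀ b : B, Algebra.trace K L (x * algebraMap B L b) ∈ (algebraMap A K).range := by
  classical
  haveI : Algebra.IsIntegral A B := Algebra.IsIntegral.of_finite A B
  haveI : IsIntegrallyClosedIn B L := IsIntegrallyClosedIn.of_isIntegralClosure (R := B)
  haveI : IsIntegralClosure B A L := IsIntegralClosure.of_isIntegrallyClosedIn
  haveI := IsIntegralClosure.isLocalization A K L B
  set N : Submodule A L := (I : Submodule B L).restrictScalars A with hNdef
  have hAL : Function.Injective (algebraMap A L) := by
    rw [IsScalarTower.algebraMap_eq A K L]
    exact (algebraMap K L).injective.comp (IsFractionRing.injective A K)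
  -- a nonzero element of I
  obtain ⟨x, hxI, hx0⟩ : ∃ x ∈ I, x ≠ 0 := by
    by_contra h
    push_neg at h
    exact hI (FractionalIdeal.eq_zero_iff.mpr h)
  have hdenom : ∀ z : L, ∃ (a : A⁰) (w : L), w ∈ N ∧ (algebraMap A L a) * z = w := by
    intro z
    obtain ⟨⟨b, s⟩, hbs⟩ := IsLocalization.surj (Algebra.algebraMapSubmonoid B A⁰) (z * x⁻¹)
    obtain ⟨a, ha, has⟩ := s.2
    refine ⟨⟨a, ha⟩, algebraMap B L b * x, ?_, ?_⟩
    · have : b • x ∈ (I : Submodule B L) := Submodule.smul_mem _ b hxI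
      simpa [Algebra.smul_def, hNdef] using this
    · have hs : algebraMap B L s.1 = algebraMap A L a := by
        rw [← has, ← IsScalarTower.algebraMap_apply]
      have := hbs
      rw [hs] at this
      field_simp at this ⊢
      rw [mul_comm] at this
      rw [mul_comm, this]
  -- the scaled trace form
  set β : LinearMap.BilinForm K L := LinearMap.mk₂ K (fun x y => Algebra.trace K L (x * y * c))
    (fun m n p => by rw [add_mul, add_mul, map_add])
    (fun k m n => by rw [smul_mul_assoc, smul_mul_assoc, map_smul])
    (fun m n p => by rw [mul_add, add_mul, map_add])
    (fun k m n => by rw [mul_smul_comm, smul_mul_assoc, map_smul]) with hβdef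
  have hβapp : ∀ x y : L, β x y = Algebra.trace K L (x * y * c) := fun x y => rfl
  have hβN : β.Nondegenerate := by
    refine LinearMap.BilinForm.Nondegenerate.ofSeparatingLeft ?_
    intro w hw
    have hwc : w * c = 0 := by
      apply (traceForm_nondegenerate K L).1 (w * c)
      intro n
      have := hw n
      rw [hβapp] at this
      simpa [Algebra.traceForm_apply, mul_right_comm] using this
    rcases mul_eq_zero.mp hwc with h | h
    · exact h
    · exact absurd h hc
  have hALne : ∀ a : A⁰, algebraMap A L a.1 ≠ 0 := by
    intro a h
    exact nonZeroDivisors.coe_ne_zero a (hAL (by simpa using h))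
  have hAKne : ∀ a : A⁰, algebraMap A K a.1 ≠ 0 := by
    intro a h
    exact nonZeroDivisors.coe_ne_zero a ((IsFractionRing.injective A K) (by simpa using h))
  have hKLalg : ∀ a : A, algebraMap K L (algebraMap A K a) = algebraMap A L a :=
    fun a => (IsScalarTower.algebraMap_apply A K L a).symm
  have hspan : Submodule.span K (N : Set L) = ⊤ := by
    rw [eq_top_iff]
    intro z _
    obtain ⟨a, w, hw, haw⟩ := hdenom z
    have : z = (algebraMap A K a.1)⁻¹ • w := by
      rw [Algebra.smul_def, map_inv₀, hKLalg, ← haw, ← mul_assoc,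
        inv_mul_cancel₀ (hALne a), one_mul]
    rw [this]
    exact Submodule.smul_mem _ _ (Submodule.subset_span hw)
  have hsep : ∀ w v : L, (∀ y ∈ N, β w y = β v y) → w = v := by
    intro w v h
    have hker : ∀ y : L, β (w - v) y = 0 := by
      have hle : Submodule.span K (N : Set L) ≤ LinearMap.ker (β (w - v)) := by
        rw [Submodule.span_le]
        intro y hy
        simp only [SetLike.mem_coe, LinearMap.mem_ker, map_sub, LinearMap.sub_apply] at *
        rw [h y hy, sub_self]
      rw [hspan, top_le_iff] at hle
      intro y
      exact LinearMap.mem_ker.mp (hle.ge Submodule.mem_top)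
    exact sub_eq_zero.mp (hβN.1 _ hker)
  -- partial inverse of algebraMap A K
  let φ : K → A := fun k => if h : ∃ a : A, algebraMap A K a = k then h.choose else 0
  have hφ : ∀ {k : K}, k ∈ (algebraMap A K).range → algebraMap A K (φ k) = k := by
    intro k hk
    obtain ⟨a, ha⟩ := hk
    have hex : ∃ a : A, algebraMap A K a = k := ⟨a, ha⟩
    show algebraMap A K (if h : ∃ a : A, algebraMap A K a = k then h.choose else 0) = k
    rw [dif_pos hex]
    exact hex.choose_spec
  -- membership in the dual submodule vs the dual fractional ideal
  have hdmem : ∀ x : L, x ∈ β.dualSubmodule N ↔ x * c ∈ FractionalIdeal.dual A K I := by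
    intro x
    rw [FractionalIdeal.mem_dual hI, LinearMap.BilinForm.mem_dualSubmodule]
    constructor
    · intro h a ha
      have := h a (by simpa [hNdef] using ha)
      rw [hβapp, Submodule.mem_one] at this
      rw [Algebra.traceForm_apply, show x * c * a = x * a * c by ring]
      exact this
    · intro h y hy
      have := h y (by simpa [hNdef] using hy)
      rw [Algebra.traceForm_apply] at this
      rw [hβapp, Submodule.mem_one, show x * y * c = x * c * y by ring]
      exact this
  have hNmem : ∀ x : L, x ∈ N ↔ x ∈ I := by
    intro x
    simp [hNdef, FractionalIdeal.mem_coe]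
  -- the dual submodule equals N iff dual I = c * I
  have hIff2 : β.dualSubmodule N = N ↔
      FractionalIdeal.dual A K I = FractionalIdeal.spanSingleton B⁰ c * I := by
    constructor
    · intro h
      ext z
      rw [FractionalIdeal.mem_singleton_mul]
      constructor
      · intro hz
        refine ⟨z * c⁻¹, ?_, by field_simp⟩
        rw [← hNmem, ← h, hdmem]
        rwa [inv_mul_cancel_right₀ hc z]
      · rintro ⟨y, hy, rfl⟩
        have : c * y * c⁻¹ ∈ N := by
          rw [hNmem]
          rwa [show c * y * c⁻¹ = y by rw [mul_comm c y]; exact mul_inv_cancel_right₀ hc y]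
        rw [← h, hdmem] at this
        rwa [inv_mul_cancel_right₀ hc (c * y)] at this
    · intro h
      ext z
      rw [hdmem z, h, hNmem z, FractionalIdeal.mem_singleton_mul]
      constructor
      · rintro ⟨y, hy, hzy⟩
        have hzy' : z = y := mul_left_cancel₀ hc (by rw [← hzy, mul_comm])
        rwa [hzy']
      · intro hz
        exact ⟨z, hz, mul_comm z c⟩
  have hIff3 : FractionalIdeal.dual A K I = FractionalIdeal.spanSingleton B⁰ c * I ↔
      FractionalIdeal.spanSingleton B⁰ c * I ^ 2 = FractionalIdeal.dual A K 1 := by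
    rw [FractionalIdeal.dual_eq_mul_inv A K I, sq, ← div_eq_mul_inv, div_eq_iff hI]
    constructor
    · intro h; rw [h]; ring
    · intro h; rw [← h]; ring
  have h10 : (1 : FractionalIdeal B⁰ L) ≠ 0 := by
    intro h
    have : (1 : L) ∈ (1 : FractionalIdeal B⁰ L) := (FractionalIdeal.mem_one_iff _).mpr ⟨1, map_one _⟩
    rw [h, FractionalIdeal.mem_zero_iff] at this
    exact one_ne_zero this
  have hRHS : (∀ x : L,
        x ∈ (FractionalIdeal.spanSingleton B⁰ c * I ^ 2 : FractionalIdeal B⁰ L) ↔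
        ∀ b : B, Algebra.trace K L (x * algebraMap B L b) ∈ (algebraMap A K).range) ↔
      FractionalIdeal.spanSingleton B⁰ c * I ^ 2 = FractionalIdeal.dual A K 1 := by
    rw [← FractionalIdeal.coeToSubmodule_inj]
    rw [show ((FractionalIdeal.spanSingleton B⁰ c * I ^ 2 : FractionalIdeal B⁰ L) :
      Submodule B L) = (FractionalIdeal.spanSingleton B⁰ c * I ^ 2 :
      FractionalIdeal B⁰ L) from rfl]
    constructor
    · intro h
      ext z
      rw [FractionalIdeal.mem_coe, FractionalIdeal.mem_coe, h z,
        FractionalIdeal.mem_dual h10]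
      constructor
      · intro hz a ha
        obtain ⟨b, rfl⟩ := (FractionalIdeal.mem_one_iff _).mp ha
        exact hz b
      · intro hz b
        exact hz _ ((FractionalIdeal.mem_one_iff _).mpr ⟨b, rfl⟩)
    · intro h z
      have : z ∈ (FractionalIdeal.spanSingleton B⁰ c * I ^ 2 : FractionalIdeal B⁰ L) ↔
          z ∈ FractionalIdeal.dual A K (1 : FractionalIdeal B⁰ L) := by
        rw [← FractionalIdeal.mem_coe, ← FractionalIdeal.mem_coe, h]
      rw [this, FractionalIdeal.mem_dual h10]
      constructor
      · intro hz b
        have := hz _ ((FractionalIdeal.mem_one_iff _).mpr ⟨b, rfl⟩)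
        rwa [Algebra.traceForm_apply] at this
      · intro hz a ha
        obtain ⟨b, rfl⟩ := (FractionalIdeal.mem_one_iff _).mp ha
        rw [Algebra.traceForm_apply]
        exact hz b
  rw [hRHS, ← hIff3, ← hIff2]
  constructor
  · rintro ⟨β₀, hβ₀, hinj, hsurj⟩
    apply le_antisymm
    · intro z hz
      have hzr : ∀ y : (I : Submodule B L), β z ↑y ∈ (algebraMap A K).range :=
        fun y => RingHom.mem_range.mp (Submodule.mem_one.mp (hz ↑y y.2))
      let f : (I : Submodule B L) →ₗ[A] A :=
        { toFun := fun y => φ (β z ↑y)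
          map_add' := by
            intro y₁ y₂
            apply IsFractionRing.injective A K
            rw [map_add, hφ (hzr _), hφ (hzr _), hφ (hzr _), Submodule.coe_add, map_add]
          map_smul' := by
            intro a y
            apply IsFractionRing.injective A K
            rw [RingHom.id_apply, Algebra.smul_def, map_mul, hφ (hzr _), hφ (hzr _),
              Submodule.coe_smul_of_tower, ← algebraMap_smul K (M := L) a, map_smul,
              smul_eq_mul]
            simp }
      obtain ⟨w, hw⟩ := hsurj f
      have hzw : (w : L) = z := by
        apply hsep
        intro y hy
        have hy' : y ∈ (I : Submodule B L) := hy
        calc β ↑w y = algebraMap A K (β₀ w ⟨y, hy'⟩) := by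
              rw [hβ₀]; exact (hβapp _ _).symm
          _ = algebraMap A K (f ⟨y, hy'⟩) := by rw [hw]
          _ = β z y := hφ (hzr ⟨y, hy'⟩)
      rw [← hzw]
      exact w.2
    · intro z hz y hy
      exact Submodule.mem_one.mpr ⟨β₀ ⟨z, hz⟩ ⟨y, hy⟩, by rw [hβ₀]; exact (hβapp _ _).symm⟩
  · intro h
    have hmr : ∀ (x y : (I : Submodule B L)), β ↑x ↑y ∈ (algebraMap A K).range := by
      intro x y
      have hx' : (x : L) ∈ β.dualSubmodule N := by rw [h]; exact x.2
      exact RingHom.mem_range.mp (Submodule.mem_one.mp (hx' ↑y y.2))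
    refine ⟨LinearMap.mk₂' A A (fun x y => φ (β ↑x ↑y)) ?_ ?_ ?_ ?_, fun x y => ?_, ?_, ?_⟩
    · intro m₁ m₂ n
      apply IsFractionRing.injective A K
      rw [map_add, hφ (hmr _ _), hφ (hmr _ _), hφ (hmr _ _), Submodule.coe_add, map_add,
        LinearMap.add_apply]
    · intro a m n
      apply IsFractionRing.injective A K
      rw [Algebra.smul_def, map_mul, hφ (hmr _ _), hφ (hmr _ _), Submodule.coe_smul_of_tower,
        ← algebraMap_smul K (M := L) a, map_smul, LinearMap.smul_apply, smul_eq_mul]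
      simp
    · intro m n₁ n₂
      apply IsFractionRing.injective A K
      rw [map_add, hφ (hmr _ _), hφ (hmr _ _), hφ (hmr _ _), Submodule.coe_add, map_add]
    · intro a m n
      apply IsFractionRing.injective A K
      rw [Algebra.smul_def, map_mul, hφ (hmr _ _), hφ (hmr _ _), Submodule.coe_smul_of_tower,
        ← algebraMap_smul K (M := L) a, map_smul, smul_eq_mul]
      simp
    · rw [LinearMap.mk₂'_apply, hφ (hmr x y), hβapp]
    · intro x y hxy
      apply Subtype.ext
      apply hsep
      intro u hu
      have h1 := LinearMap.congr_fun hxy (⟨u, hu⟩ : (I : Submodule B L))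
      rw [LinearMap.mk₂'_apply, LinearMap.mk₂'_apply] at h1
      calc β ↑x u = algebraMap A K (φ (β ↑x u)) := (hφ (hmr x ⟨u, hu⟩)).symm
        _ = algebraMap A K (φ (β ↑y u)) := by rw [h1]
        _ = β ↑y u := hφ (hmr y ⟨u, hu⟩)
    · intro f
      let j : (I : Submodule B L) →ₗ[A] L :=
        { toFun := fun y => ↑y
          map_add' := fun _ _ => rfl
          map_smul' := fun _ _ => rfl }
      haveI hLM : IsLocalizedModule A⁰ j := by
        constructor
        · intro s
          rw [Module.End.isUnit_iff]
          constructor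
          · intro u v huv
            simp only [Module.algebraMap_end_apply, Algebra.smul_def] at huv
            exact mul_left_cancel₀ (hALne s) huv
          · intro u
            refine ⟨(algebraMap A L s.1)⁻¹ * u, ?_⟩
            rw [Module.algebraMap_end_apply, Algebra.smul_def, ← mul_assoc,
              mul_inv_cancel₀ (hALne s), one_mul]
        · intro z
          obtain ⟨a, w, hw, haw⟩ := hdenom z
          refine ⟨(⟨w, hw⟩, a), ?_⟩
          show a.1 • z = w
          rw [Algebra.smul_def, haw]
        · intro x₁ x₂ hx
          exact ⟨1, by rw [Subtype.ext (hx : (x₁ : L) = x₂)]⟩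
      have hu : ∀ s : A⁰, IsUnit (algebraMap A (Module.End A K) s) := by
        intro s
        rw [Module.End.isUnit_iff]
        constructor
        · intro u v huv
          simp only [Module.algebraMap_end_apply, Algebra.smul_def] at huv
          exact mul_left_cancel₀ (hAKne s) huv
        · intro u
          refine ⟨(algebraMap A K s.1)⁻¹ * u, ?_⟩
          rw [Module.algebraMap_end_apply, Algebra.smul_def, ← mul_assoc,
            mul_inv_cancel₀ (hAKne s), one_mul]
      let g : (I : Submodule B L) →ₗ[A] K := (Algebra.linearMap A K).comp f
      let F1 : L →ₗ[A] K := IsLocalizedModule.lift A⁰ j g hu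
      have hF1 : ∀ y, F1 (j y) = g y := fun y => IsLocalizedModule.lift_apply A⁰ j g hu y
      let F : L →ₗ[K] K := LinearMap.extendScalarsOfIsLocalization A⁰ K F1
      set x := (β.toDual hβN).symm F with hxdef
      have hβx : ∀ y : L, β x y = F y := by
        intro y
        have h2 := (β.toDual hβN).apply_symm_apply F
        rw [← LinearMap.BilinForm.toDual_def hβN (m := x) (n := y), hxdef, h2]
      have hxmem : x ∈ N := by
        rw [← h]
        intro y hy
        rw [hβx y, show F y = F1 y from rfl, show y = j ⟨y, hy⟩ from rfl, hF1]
        exact Submodule.mem_one.mpr ⟨f ⟨y, hy⟩, rfl⟩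
      refine ⟨⟨x, hxmem⟩, ?_⟩
      apply LinearMap.ext
      intro y
      apply IsFractionRing.injective A K
      rw [LinearMap.mk₂'_apply, hφ (hmr ⟨x, hxmem⟩ y)]
      calc β x ↑y = F ↑y := hβx ↑y
        _ = F1 (j y) := rfl
        _ = g y := hF1 y
        _ = algebraMap A K (f y) := rfl
end

section
/- Let B|A be a finite extension of Dedekind domains with separable fraction field extension, and let 𝔭 be a nonzero prime of A such that every prime 𝔮 of B above 𝔭 is unramified with separable residue field extension k(𝔮)|k(𝔭). Then v_𝔮(Δ(B|A)) = 0 for all primes 𝔮 of B above 𝔭, i.e., no such 𝔮 occurs in the prime factorization of the codifferent. -/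
set_option linter.unusedSectionVars false
set_option maxHeartbeats 1000000

open nonZeroDivisors

section Aux

variable {A B K L : Type}
    [CommRing A] [IsDomain A] [IsDedekindDomain A]
    [CommRing B] [IsDomain B] [IsDedekindDomain B]
    [Field K] [Field L] [Algebra A K] [IsFractionRing A K]
    [Algebra B L] [IsFractionRing B L]
    [Algebra A B] [Module.Finite A B]
    [Algebra K L] [Algebra A L] [IsScalarTower A K L] [IsScalarTower A B L]
    [IsIntegralClosure B A L]
    [FiniteDimensional K L] [Algebra.IsSeparable K L]

lemma my_aux_trace_mem (𝔭 : Ideal A) :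
    ∀ z ∈ 𝔭.map (algebraMap A B),
      ∀ y ∈ FractionalIdeal.dual A K (1 : FractionalIdeal B⁰ L),
      Algebra.trace K L (algebraMap B L z * y) ∈ Submodule.map (Algebra.linearMap A K) 𝔭 := by
  let S : Ideal B :=
    { carrier := {z | ∀ y ∈ FractionalIdeal.dual A K (1 : FractionalIdeal B⁰ L),
        Algebra.trace K L (algebraMap B L z * y) ∈ Submodule.map (Algebra.linearMap A K) 𝔭}
      zero_mem' := by intro y hy; simp
      add_mem' := by
        intro a b ha hb y hy
        have := Submodule.add_mem _ (ha y hy) (hb y hy)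
        simpa [map_add, add_mul] using this
      smul_mem' := by
        intro b z hz y hy
        have hby : algebraMap B L b * y ∈
            FractionalIdeal.dual A K (1 : FractionalIdeal B⁰ L) := by
          have := Submodule.smul_mem
            (FractionalIdeal.dual A K (1 : FractionalIdeal B⁰ L) : Submodule B L) b
            (FractionalIdeal.mem_coe.mpr hy)
          rw [Algebra.smul_def] at this
          exact FractionalIdeal.mem_coe.mp this
        have := hz _ hby
        simpa [smul_eq_mul, map_mul, mul_assoc, mul_left_comm] using this }
  have hle : 𝔭.map (algebraMap A B) ≤ S := by
    rw [Ideal.map_le_iff_le_comap]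
    intro a ha
    intro y hy
    have h1 : Algebra.trace K L y ∈ (algebraMap A K).range := by
      have := (FractionalIdeal.mem_dual (one_ne_zero : (1 : FractionalIdeal B⁰ L) ≠ 0)).mp hy 1
        (FractionalIdeal.one_mem_one B⁰)
      simpa [Algebra.traceForm_apply] using this
    obtain ⟨t, ht⟩ := h1
    have halg : algebraMap B L (algebraMap A B a) = algebraMap K L (algebraMap A K a) := by
      rw [← IsScalarTower.algebraMap_apply, ← IsScalarTower.algebraMap_apply]
    rw [halg, ← Algebra.smul_def, map_smul, ← ht, smul_eq_mul, ← map_mul]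
    exact ⟨a * t, Ideal.mul_mem_right t 𝔭 ha, rfl⟩
  exact fun z hz => hle hz


lemma my_finite_quotient (𝔭 : Ideal A) (I : Ideal B) (h : 𝔭 ≤ I.comap (algebraMap A B)) :
    letI := Ideal.Quotient.algebraQuotientOfLEComap h
    Module.Finite (A ⧸ 𝔭) (B ⧸ I) := by
  letI := Ideal.Quotient.algebraQuotientOfLEComap h
  haveI : IsScalarTower A (A ⧸ 𝔭) (B ⧸ I) := by
    apply IsScalarTower.of_algebraMap_eq'
    ext a
    show algebraMap A (B ⧸ I) a = Ideal.quotientMap I (algebraMap A B) h (Ideal.Quotient.mk 𝔭 a)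
    rw [Ideal.quotientMap_mk, ← Ideal.Quotient.algebraMap_eq,
      ← IsScalarTower.algebraMap_apply]
  haveI : Module.Finite A (B ⧸ I) :=
    Module.Finite.of_surjective (IsScalarTower.toAlgHom A B (B ⧸ I)).toLinearMap
      Ideal.Quotient.mk_surjective
  exact Module.Finite.of_restrictScalars_finite A (A ⧸ 𝔭) (B ⧸ I)

include K L in
lemma my_key (𝔭 : Ideal A) (h𝔭 : 𝔭.IsPrime) (h𝔭0 : 𝔭 ≠ ⊥)
    (hunram : ∀ 𝔮 : Ideal B, 𝔮.IsPrime → 𝔮.comap (algebraMap A B) = 𝔭 →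
      Ideal.ramificationIdx' 𝔭 𝔮 = 1)
    (hsep : ∀ (𝔮 : Ideal B) (_ : 𝔮.IsPrime)
      (hover : 𝔮.comap (algebraMap A B) = 𝔭),
      @Algebra.IsSeparable (A ⧸ 𝔭) (B ⧸ 𝔮) _ _
        (Ideal.Quotient.algebraQuotientOfLEComap (le_of_eq hover.symm)))
    (w : IsDedekindDomain.HeightOneSpectrum B)
    (hw : w.asIdeal.comap (algebraMap A B) = 𝔭)
    [NoZeroSMulDivisors A B] :
    ¬ w.asIdeal ∣ differentIdeal A B := by
  classical
  intro hdvd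
  -- basic facts and instances
  have hinjAL : Function.Injective (algebraMap A L) := by
    rw [IsScalarTower.algebraMap_eq A K L]
    exact (algebraMap K L).injective.comp (IsFractionRing.injective A K)
  have hinj : Function.Injective (algebraMap A B) := by
    have : (algebraMap B L).comp (algebraMap A B) = algebraMap A L :=
      (IsScalarTower.algebraMap_eq A B L).symm
    refine Function.Injective.of_comp (f := algebraMap B L) ?_
    rwa [← RingHom.coe_comp, this]
  haveI h𝔭max : 𝔭.IsMaximal := h𝔭.isMaximal h𝔭0
  set 𝔮 : Ideal B := w.asIdeal with h𝔮def
  haveI h𝔮max : 𝔮.IsMaximal := w.isPrime.isMaximal w.ne_bot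
  have hpB_ne : 𝔭.map (algebraMap A B) ≠ ⊥ := by
    rw [Ne, Ideal.map_eq_bot_iff_of_injective hinj]
    exact h𝔭0
  -- factorization pB = 𝔮 * 𝔠 with 𝔮 ⊔ 𝔠 = ⊤
  obtain ⟨𝔠, hcop, h𝔠⟩ := Ideal.eq_prime_pow_mul_coprime hpB_ne 𝔮
  have hcount : (UniqueFactorizationMonoid.normalizedFactors (𝔭.map (algebraMap A B))).count 𝔮 = 1 := by
    rw [← Ideal.IsDedekindDomain.ramificationIdx'_eq_normalizedFactors_count hpB_ne
      w.isPrime w.ne_bot]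
    exact hunram 𝔮 w.isPrime hw
  rw [hcount, pow_one] at h𝔠
  have h𝔠le : 𝔭.map (algebraMap A B) ≤ 𝔠 := h𝔠.le.trans Ideal.mul_le_right
  have hqcinf : 𝔭.map (algebraMap A B) = 𝔮 ⊓ 𝔠 := by
    rw [h𝔠, Ideal.mul_eq_inf_of_coprime hcop]
  -- the codifferent contains 𝔮⁻¹
  have h𝔮0 : (𝔮 : FractionalIdeal B⁰ L) ≠ 0 := by
    rw [Ne, FractionalIdeal.coeIdeal_eq_zero]; exact w.ne_bot
  have hdual_ne : FractionalIdeal.dual A K (1 : FractionalIdeal B⁰ L) ≠ 0 :=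
    FractionalIdeal.dual_ne_zero A K one_ne_zero
  have hd_eq : (differentIdeal A B : FractionalIdeal B⁰ L) =
      (FractionalIdeal.dual A K (1 : FractionalIdeal B⁰ L))⁻¹ :=
    coeIdeal_differentIdeal A K L B
  have hinv_le : (𝔮 : FractionalIdeal B⁰ L)⁻¹ ≤
      FractionalIdeal.dual A K (1 : FractionalIdeal B⁰ L) := by
    have hle : (differentIdeal A B : FractionalIdeal B⁰ L) ≤ (𝔮 : FractionalIdeal B⁰ L) :=
      FractionalIdeal.coeIdeal_le_coeIdeal L |>.mpr (Ideal.dvd_iff_le.mp hdvd)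
    have h1 : (𝔮 : FractionalIdeal B⁰ L)⁻¹ * (differentIdeal A B : FractionalIdeal B⁰ L) ≤ 1 := by
      calc (𝔮 : FractionalIdeal B⁰ L)⁻¹ * (differentIdeal A B : FractionalIdeal B⁰ L)
          ≤ (𝔮 : FractionalIdeal B⁰ L)⁻¹ * (𝔮 : FractionalIdeal B⁰ L) :=
            mul_le_mul_right hle _
        _ = 1 := by rw [mul_comm]; exact mul_inv_cancel₀ h𝔮0
    calc (𝔮 : FractionalIdeal B⁰ L)⁻¹
        = FractionalIdeal.dual A K (1 : FractionalIdeal B⁰ L) *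
          ((𝔮 : FractionalIdeal B⁰ L)⁻¹ * (differentIdeal A B : FractionalIdeal B⁰ L)) := by
          rw [hd_eq, mul_comm ((𝔮 : FractionalIdeal B⁰ L)⁻¹), ← mul_assoc,
            mul_inv_cancel₀ hdual_ne, one_mul]
      _ ≤ FractionalIdeal.dual A K (1 : FractionalIdeal B⁰ L) * 1 :=
          mul_le_mul_right h1 _
      _ = FractionalIdeal.dual A K (1 : FractionalIdeal B⁰ L) := mul_one _
  -- for c ∈ 𝔠, the trace lies in 𝔭
  have key : ∀ c ∈ 𝔠, Algebra.intTrace A B c ∈ 𝔭 := by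
    intro c hc
    have h𝔠eq : (𝔠 : FractionalIdeal B⁰ L) = (𝔭.map (algebraMap A B) : FractionalIdeal B⁰ L) *
        (𝔮 : FractionalIdeal B⁰ L)⁻¹ := by
      rw [h𝔠, FractionalIdeal.coeIdeal_mul, mul_comm (𝔮 : FractionalIdeal B⁰ L),
        mul_assoc, mul_inv_cancel₀ h𝔮0, mul_one]
    have hmem : algebraMap B L c ∈ (𝔭.map (algebraMap A B) : FractionalIdeal B⁰ L) *
        FractionalIdeal.dual A K (1 : FractionalIdeal B⁰ L) := by
      have h1 : algebraMap B L c ∈ (𝔠 : FractionalIdeal B⁰ L) :=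
        FractionalIdeal.mem_coeIdeal_of_mem B⁰ hc
      rw [h𝔠eq] at h1
      have h2 : (𝔭.map (algebraMap A B) : FractionalIdeal B⁰ L) * (𝔮 : FractionalIdeal B⁰ L)⁻¹ ≤
          (𝔭.map (algebraMap A B) : FractionalIdeal B⁰ L) *
          FractionalIdeal.dual A K (1 : FractionalIdeal B⁰ L) :=
        mul_le_mul_right hinv_le _
      exact h2 h1
    have hmem' : algebraMap B L c ∈
        ((𝔭.map (algebraMap A B) : FractionalIdeal B⁰ L) : Submodule B L) *
        ((FractionalIdeal.dual A K (1 : FractionalIdeal B⁰ L) : FractionalIdeal B⁰ L) :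
          Submodule B L) := by
      rw [← FractionalIdeal.coe_mul]
      exact hmem
    have htr : Algebra.trace K L (algebraMap B L c) ∈
        Submodule.map (Algebra.linearMap A K) 𝔭 := by
      refine Submodule.mul_induction_on hmem' ?_ ?_
      · intro m hm y hy
        obtain ⟨z, hz, rfl⟩ := (FractionalIdeal.mem_coeIdeal B⁰).mp
          (FractionalIdeal.mem_coe.mp hm)
        exact my_aux_trace_mem (K := K) 𝔭 z hz y (FractionalIdeal.mem_coe.mp hy)
      · intro x y hx hy
        rw [map_add]
        exact Submodule.add_mem _ hx hy
    rw [← Algebra.algebraMap_intTrace (A := A) (K := K) (L := L) (B := B) c] at htr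
    obtain ⟨a, ha, haeq⟩ := htr
    have : a = Algebra.intTrace A B c := IsFractionRing.injective A K haeq
    rwa [← this]
  -- pass to the quotient
  letI : Field (A ⧸ 𝔭) := Ideal.Quotient.field 𝔭
  have hq0 : ∀ c ∈ 𝔠, Algebra.trace (A ⧸ 𝔭) (B ⧸ 𝔭.map (algebraMap A B))
      (Ideal.Quotient.mk (𝔭.map (algebraMap A B)) c) = 0 := by
    intro c hc
    rw [Algebra.trace_quotient_eq_of_isDedekindDomain B 𝔭 c, Ideal.Quotient.eq_zero_iff_mem]
    exact key c hc
  have h1 : 𝔭 ≤ 𝔮.comap (algebraMap A B) := le_of_eq hw.symm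
  have h2 : 𝔭 ≤ 𝔠.comap (algebraMap A B) := Ideal.le_comap_map.trans (Ideal.comap_mono h𝔠le)
  letI alg1 : Algebra (A ⧸ 𝔭) (B ⧸ 𝔮) := Ideal.Quotient.algebraQuotientOfLEComap h1
  letI alg2 : Algebra (A ⧸ 𝔭) (B ⧸ 𝔠) := Ideal.Quotient.algebraQuotientOfLEComap h2
  haveI := my_finite_quotient 𝔭 𝔮 h1
  haveI := my_finite_quotient 𝔭 𝔠 h2
  haveI : Algebra.IsSeparable (A ⧸ 𝔭) (B ⧸ 𝔮) := hsep 𝔮 w.isPrime hw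
  letI : Field (B ⧸ 𝔮) := Ideal.Quotient.field 𝔮
  have htrne : Algebra.trace (A ⧸ 𝔭) (B ⧸ 𝔮) ≠ 0 := Algebra.trace_ne_zero (A ⧸ 𝔭) (B ⧸ 𝔮)
  obtain ⟨y, hy⟩ : ∃ y, Algebra.trace (A ⧸ 𝔭) (B ⧸ 𝔮) y ≠ 0 := by
    by_contra h
    push_neg at h
    exact htrne (LinearMap.ext fun y => h y)
  have hco : IsCoprime 𝔮 𝔠 := (Ideal.isCoprime_iff_sup_eq).mpr hcop
  let e₂ : (B ⧸ 𝔭.map (algebraMap A B)) ≃+* (B ⧸ 𝔮) × (B ⧸ 𝔠) :=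
    (Ideal.quotEquivOfEq hqcinf).trans (Ideal.quotientInfEquivQuotientProd 𝔮 𝔠 hco)
  have he₂ : ∀ z : B, e₂ (Ideal.Quotient.mk (𝔭.map (algebraMap A B)) z) =
      (Ideal.Quotient.mk 𝔮 z, Ideal.Quotient.mk 𝔠 z) := by
    intro z
    ext
    · simp [e₂, Ideal.quotEquivOfEq_mk, Ideal.quotientInfEquivQuotientProd_fst,
        Ideal.Quotient.factor_mk]
    · simp [e₂, Ideal.quotEquivOfEq_mk, Ideal.quotientInfEquivQuotientProd_snd,
        Ideal.Quotient.factor_mk]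
  obtain ⟨x, hx⟩ := e₂.surjective (y, 0)
  obtain ⟨c, rfl⟩ := Ideal.Quotient.mk_surjective x
  rw [he₂ c] at hx
  have hcq : Ideal.Quotient.mk 𝔮 c = y := congrArg Prod.fst hx
  have hc𝔠 : c ∈ 𝔠 := Ideal.Quotient.eq_zero_iff_mem.mp (congrArg Prod.snd hx)
  have hcomm : (algebraMap (A ⧸ 𝔭) ((B ⧸ 𝔮) × (B ⧸ 𝔠))).comp
      ((RingEquiv.refl (A ⧸ 𝔭)) : (A ⧸ 𝔭) →+* (A ⧸ 𝔭)) =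
      (e₂ : (B ⧸ 𝔭.map (algebraMap A B)) →+* (B ⧸ 𝔮) × (B ⧸ 𝔠)).comp
        (algebraMap (A ⧸ 𝔭) (B ⧸ 𝔭.map (algebraMap A B))) := by
    ext a <;>
      · have hA : algebraMap (A ⧸ 𝔭) (B ⧸ 𝔭.map (algebraMap A B)) (Ideal.Quotient.mk 𝔭 a) =
            Ideal.Quotient.mk (𝔭.map (algebraMap A B)) (algebraMap A B a) :=
          Ideal.Quotient.algebraMap_quotient_map_quotient (p := 𝔭) a
        simp only [RingHom.coe_comp, Function.comp_apply, RingEquiv.coe_toRingHom,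
          RingEquiv.refl_apply, hA, he₂]
        first
        | exact Ideal.quotientMap_mk (H := h1)
        | exact Ideal.quotientMap_mk (H := h2)
  have htr := Algebra.trace_eq_of_equiv_equiv (RingEquiv.refl (A ⧸ 𝔭)) e₂ hcomm
    (Ideal.Quotient.mk (𝔭.map (algebraMap A B)) c)
  rw [hq0 c hc𝔠, he₂ c, hcq, Ideal.Quotient.eq_zero_iff_mem.mpr hc𝔠] at htr
  rw [Algebra.trace_prod_apply] at htr
  simp only [map_zero, add_zero] at htr
  exact hy (by simpa using htr.symm)

end Aux

/-- **Unramified primes do not divide the codifferent.**  Let `B|A` be a finite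
extension of Dedekind domains with separable fraction field extension `L|K`
(with `B` the integral closure of `A` in `L`), and let `𝔭` be a nonzero prime of
`A` such that every prime `𝔮` of `B` above `𝔭` is unramified with separable
residue field extension `k(𝔮)|k(𝔭)`.  Then `v_𝔮(Δ(B|A)) = 0` for every prime `𝔮`
of `B` above `𝔭`, where `Δ(B|A)` is the codifferent fractional ideal. -/
theorem codifferent_valuation_zero_of_unramified
    {A B K L : Type}
    [CommRing A] [IsDomain A] [IsDedekindDomain A]
    [CommRing B] [IsDomain B] [IsDedekindDomain B]
    [Field K] [Field L] [Algebra A K] [IsFractionRing A K]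
    [Algebra B L] [IsFractionRing B L]
    [Algebra A B] [Module.Finite A B]
    [Algebra K L] [Algebra A L] [IsScalarTower A K L] [IsScalarTower A B L]
    [IsIntegralClosure B A L]
    [FiniteDimensional K L] [Algebra.IsSeparable K L]
    (𝔭 : Ideal A) (h𝔭 : 𝔭.IsPrime) (h𝔭0 : 𝔭 ≠ ⊥)
    (hunram : ∀ 𝔮 : Ideal B, 𝔮.IsPrime → 𝔮.comap (algebraMap A B) = 𝔭 →
      Ideal.ramificationIdx' 𝔭 𝔮 = 1)
    (hsep : ∀ (𝔮 : Ideal B) (_ : 𝔮.IsPrime)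
      (hover : 𝔮.comap (algebraMap A B) = 𝔭),
      @Algebra.IsSeparable (A ⧸ 𝔭) (B ⧸ 𝔮) _ _
        (Ideal.Quotient.algebraQuotientOfLEComap (le_of_eq hover.symm))) :
    ∀ w : IsDedekindDomain.HeightOneSpectrum B,
      w.asIdeal.comap (algebraMap A B) = 𝔭 →
      FractionalIdeal.count L w
        (FractionalIdeal.dual A K (1 : FractionalIdeal B⁰ L)) = 0 := by
  classical
  intro w hw
  have hinj : Function.Injective (algebraMap A B) := by
    have h : (algebraMap B L).comp (algebraMap A B) = algebraMap A L :=
      (IsScalarTower.algebraMap_eq A B L).symm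
    have hAL : Function.Injective (algebraMap A L) := by
      rw [IsScalarTower.algebraMap_eq A K L]
      exact (algebraMap K L).injective.comp (IsFractionRing.injective A K)
    refine Function.Injective.of_comp (f := algebraMap B L) ?_
    rwa [← RingHom.coe_comp, h]
  haveI : NoZeroSMulDivisors A B := ⟨fun {c x} h => by
    rw [Algebra.smul_def] at h
    rcases mul_eq_zero.mp h with h | h
    · exact Or.inl (hinj (by rw [h, map_zero]))
    · exact Or.inr h⟩
  have hnot : ¬ w.asIdeal ∣ differentIdeal A B := my_key (K := K) (L := L) 𝔭 h𝔭 h𝔭0 hunram hsep w hw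
  have hdual_ne : FractionalIdeal.dual A K (1 : FractionalIdeal B⁰ L) ≠ 0 :=
    FractionalIdeal.dual_ne_zero A K one_ne_zero
  have hd_eq : (differentIdeal A B : FractionalIdeal B⁰ L) =
      (FractionalIdeal.dual A K (1 : FractionalIdeal B⁰ L))⁻¹ :=
    coeIdeal_differentIdeal A K L B
  have h1 : (differentIdeal A B : FractionalIdeal B⁰ L) *
      FractionalIdeal.dual A K (1 : FractionalIdeal B⁰ L) = 1 := by
    rw [hd_eq, mul_comm]
    exact mul_inv_cancel₀ hdual_ne
  have hdual_eq : FractionalIdeal.dual A K (1 : FractionalIdeal B⁰ L) =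
      ((differentIdeal A B : FractionalIdeal B⁰ L))⁻¹ :=
    FractionalIdeal.right_inverse_eq L _ _ h1
  have h𝔡ne : differentIdeal A B ≠ 0 := by
    intro h
    rw [h] at h1
    simp at h1
  rw [hdual_eq, FractionalIdeal.count_inv, neg_eq_zero,
    FractionalIdeal.count_coe L w h𝔡ne, Nat.cast_eq_zero]
  by_contra h
  exact hnot ((Associates.count_ne_zero_iff_dvd h𝔡ne w.irreducible).mp h)
end

section
/- Let k be a field of characteristic ≠ 2, M a free k[x]-module of finite rank n, and β a unimodular symmetric bilinear form on M. Then M admits an orthogonal basis q₁,…,q_n with respect to β, and for every orthogonal basis the values β(q_i,q_i) are units, i.e., nonzero constants in k×. -/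
open Polynomial Matrix Module

section HarderDjokovic

variable {k : Type} [Field k]

lemma prod_coeff_half {ι : Type} [DecidableEq ι] (s : Finset ι) (p : ι → Polynomial k) (d : ι → ℕ)
    (h : ∀ i ∈ s, p i ≠ 0 → 2 * (p i).natDegree ≤ d i) :
    ∀ t : ℕ, 2 * t = ∑ i ∈ s, d i →
      (∏ i ∈ s, p i).coeff t = ∏ i ∈ s, (if 2 ∣ d i then (p i).coeff (d i / 2) else 0) := by
  induction s using Finset.induction_on with
  | empty =>
    intro t ht
    simp only [Finset.sum_empty] at ht
    have : t = 0 := by omega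
    simp [this]
  | @insert a s ha ih =>
    intro t ht
    rw [Finset.sum_insert ha] at ht
    rw [Finset.prod_insert ha, Finset.prod_insert ha]
    by_cases hpa : p a = 0
    · simp [hpa]
    by_cases hps : (∏ i ∈ s, p i) = 0
    · obtain ⟨i, hi, hpi⟩ := Finset.prod_eq_zero_iff.mp hps
      rw [hps]
      rw [Finset.prod_eq_zero hi (by simp [hpi])]
      simp
    have hall : ∀ i ∈ s, p i ≠ 0 := fun i hi => by
      intro hz; exact hps (Finset.prod_eq_zero hi hz)
    have hda : 2 * (p a).natDegree ≤ d a := h a (Finset.mem_insert_self a s) hpa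
    have hq : 2 * (∏ i ∈ s, p i).natDegree ≤ ∑ i ∈ s, d i := by
      rw [Polynomial.natDegree_prod _ _ hall, Finset.mul_sum]
      exact Finset.sum_le_sum fun i hi => h i (Finset.mem_insert_of_mem hi) (hall i hi)
    rw [Polynomial.coeff_mul]
    rcases Nat.even_or_odd (d a) with ⟨m, hm⟩ | ⟨j, hj⟩
    · have hmt : m ≤ t := by omega
      have h2t' : 2 * (t - m) = ∑ i ∈ s, d i := by omega
      rw [Finset.sum_eq_single (m, t - m)]
      · rw [ih (fun i hi => h i (Finset.mem_insert_of_mem hi)) (t - m) h2t']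
        have hdvd : 2 ∣ d a := ⟨m, by omega⟩
        rw [if_pos hdvd]
        congr 2
        omega
      · rintro ⟨x, y⟩ hmem hne
        rw [Finset.HasAntidiagonal.mem_antidiagonal] at hmem
        by_contra hc
        have hx : ¬ (p a).natDegree < x := fun hlt => hc (by
          rw [Polynomial.coeff_eq_zero_of_natDegree_lt hlt, zero_mul])
        have hy : ¬ (∏ i ∈ s, p i).natDegree < y := fun hlt => hc (by
          rw [Polynomial.coeff_eq_zero_of_natDegree_lt hlt, mul_zero])
        push_neg at hx hy
        have : x = m ∧ y = t - m := by omega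
        exact hne (by simp [this.1, this.2])
      · intro hnot
        exfalso
        exact hnot (Finset.HasAntidiagonal.mem_antidiagonal.mpr (by omega))
    · have hndvd : ¬ 2 ∣ d a := by omega
      rw [if_neg hndvd, zero_mul]
      apply Finset.sum_eq_zero
      rintro ⟨x, y⟩ hmem
      rw [Finset.HasAntidiagonal.mem_antidiagonal] at hmem
      by_contra hc
      have hx : ¬ (p a).natDegree < x := fun hlt => hc (by
        rw [Polynomial.coeff_eq_zero_of_natDegree_lt hlt, zero_mul])
      have hy : ¬ (∏ i ∈ s, p i).natDegree < y := fun hlt => hc (by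
        rw [Polynomial.coeff_eq_zero_of_natDegree_lt hlt, mul_zero])
      push_neg at hx hy
      omega

noncomputable def lam {n : ℕ} (G : Matrix (Fin n) (Fin n) (Polynomial k)) (w : Fin n → ℤ) :
    Matrix (Fin n) (Fin n) k :=
  Matrix.of fun i j => if (2:ℤ) ∣ (w i + w j) then (G i j).coeff (((w i + w j)/2).toNat) else 0

lemma sum_bound {ι : Type} (s : Finset ι) (f : ι → Polynomial k) (m : ℤ)
    (h : ∀ i ∈ s, f i ≠ 0 → 2 * ((f i).natDegree : ℤ) ≤ m) :
    (∑ i ∈ s, f i) ≠ 0 → 2 * (((∑ i ∈ s, f i).natDegree : ℤ)) ≤ m := by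
  intro hne
  obtain ⟨i₀, hi₀, hfne⟩ := Finset.exists_ne_zero_of_sum_ne_zero hne
  have hm : 0 ≤ m := le_trans (by positivity) (h i₀ hi₀ hfne)
  have hb : ∀ i ∈ s, (f i).natDegree ≤ m.toNat / 2 := by
    intro i hi
    by_cases hz : f i = 0
    · simp [hz]
    · have := h i hi hz
      omega
  have := Polynomial.natDegree_sum_le_of_forall_le s f hb
  omega

lemma drop_one {p : Polynomial k} {m : ℤ} (hp : p ≠ 0) (h1 : 2 * (p.natDegree : ℤ) ≤ m)
    (h2 : (2:ℤ) ∣ m → p.coeff ((m/2).toNat) = 0) : 2 * (p.natDegree : ℤ) ≤ m - 1 := by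
  rcases Int.even_or_odd m with he | ho
  · have hdvd : (2:ℤ) ∣ m := he.two_dvd
    by_contra hcon
    have heq : (m / 2).toNat = p.natDegree := by omega
    have := h2 hdvd
    rw [heq] at this
    exact hp (Polynomial.leadingCoeff_eq_zero.mp this)
  · obtain ⟨j, hj⟩ := ho
    omega

lemma step {n : ℕ} (G : Matrix (Fin n) (Fin n) (Polynomial k)) (hsym : G.IsSymm)
    (w : Fin n → ℤ)
    (hw : ∀ i j, G i j ≠ 0 → 2 * ((G i j).natDegree : ℤ) ≤ w i + w j)
    (c : Fin n → k) (hc : c ≠ 0) (hker : (lam G w).mulVec c = 0) :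
    ∃ (P : Matrix (Fin n) (Fin n) (Polynomial k)) (J : Fin n),
      P.det = 1 ∧ (Pᵀ * G * P).IsSymm ∧
      (∀ i j, (Pᵀ * G * P) i j ≠ 0 →
        2 * (((Pᵀ * G * P) i j).natDegree : ℤ) ≤
          Function.update w J (w J - 1) i + Function.update w J (w J - 1) j) := by
  classical
  have hsymm : ∀ a b, G a b = G b a := fun a b => (hsym.apply b a)
  obtain ⟨i₀, hi₀⟩ := Function.ne_iff.mp hc
  have hi₀' : c i₀ ≠ 0 := hi₀
  -- restrict c to the parity class of i₀
  set c' : Fin n → k := fun i => if (2:ℤ) ∣ (w i + w i₀) then c i else 0 with hc'def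
  have hc'i₀ : c' i₀ = c i₀ := by
    simp only [hc'def]
    rw [if_pos ⟨w i₀, by ring⟩]
  have hkerc : ∀ j, ∑ i, lam G w j i * c i = 0 := by
    intro j
    have := congrFun hker j
    simpa [Matrix.mulVec, dotProduct] using this
  have hlam_odd : ∀ a b, ¬ (2:ℤ) ∣ (w a + w b) → lam G w a b = 0 := by
    intro a b hnd
    simp [lam, hnd]
  have hker' : ∀ j, ∑ i, lam G w j i * c' i = 0 := by
    intro j
    by_cases hj : (2:ℤ) ∣ (w j + w i₀)
    · rw [← hkerc j]
      apply Finset.sum_congr rfl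
      intro i _
      by_cases hi : (2:ℤ) ∣ (w i + w i₀)
      · simp [hc'def, hi]
      · rw [hlam_odd j i (by omega)]
        ring
    · apply Finset.sum_eq_zero
      intro i _
      by_cases hi : (2:ℤ) ∣ (w i + w i₀)
      · rw [hlam_odd j i (by omega), zero_mul]
      · simp [hc'def, hi]
  -- pick JJ maximizing w on the support of c'
  have hSne : (Finset.univ.filter (fun i => c' i ≠ 0)).Nonempty := by
    refine ⟨i₀, ?_⟩
    simp only [Finset.mem_filter, Finset.mem_univ, true_and]
    rw [hc'i₀]; exact hi₀'
  obtain ⟨JJ, hJS, hJmax⟩ := Finset.exists_max_image _ w hSne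
  have hc'J : c' JJ ≠ 0 := by
    simpa using (Finset.mem_filter.mp hJS).2
  -- normalize
  set c'' : Fin n → k := fun i => (c' JJ)⁻¹ * c' i with hc''def
  have hc''J : c'' JJ = 1 := by rw [hc''def]; exact inv_mul_cancel₀ hc'J
  have hker'' : ∀ j, ∑ i, lam G w j i * c'' i = 0 := by
    intro j
    have heq : ∑ i, lam G w j i * c'' i = (c' JJ)⁻¹ * ∑ i, lam G w j i * c' i := by
      rw [Finset.mul_sum]
      exact Finset.sum_congr rfl fun i _ => by rw [hc''def]; ring
    rw [heq, hker' j, mul_zero]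
  have hpar : ∀ i, c'' i ≠ 0 → ((2:ℤ) ∣ (w JJ - w i) ∧ w i ≤ w JJ) := by
    intro i hi
    have hci : c' i ≠ 0 := by
      intro hz; exact hi (by simp [hc''def, hz])
    have hi2 : (2:ℤ) ∣ (w i + w i₀) := by
      by_contra hnd
      exact hci (by simp [hc'def, hnd])
    have hJ2 : (2:ℤ) ∣ (w JJ + w i₀) := by
      by_contra hnd
      exact hc'J (by simp [hc'def, hnd])
    constructor
    · omega
    · exact hJmax i (by simp only [Finset.mem_filter, Finset.mem_univ, true_and]; exact hci)
  set e : Fin n → ℕ := fun i => ((w JJ - w i)/2).toNat with hedef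
  have he : ∀ i, c'' i ≠ 0 → ((e i : ℤ)) * 2 = w JJ - w i := by
    intro i hi
    obtain ⟨hdvd, hle⟩ := hpar i hi
    simp only [hedef]
    omega
  set p : Fin n → Polynomial k := fun i => Polynomial.C (c'' i) * Polynomial.X ^ (e i)
    with hpdef
  have hpJ : p JJ = 1 := by
    have heJ : e JJ = 0 := by simp [hedef]
    simp [hpdef, heJ, hc''J]
  have hp0 : ∀ i, c'' i = 0 → p i = 0 := by
    intro i hi; simp [hpdef, hi]
  have hpne : ∀ i, c'' i ≠ 0 → p i ≠ 0 := by
    intro i hi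
    simp only [hpdef]
    intro hz
    apply hi
    have := congrArg (fun q => Polynomial.coeff q (e i)) hz
    simpa [Polynomial.coeff_C_mul, Polynomial.coeff_X_pow] using this
  have hpdeg : ∀ i, c'' i ≠ 0 → (p i).natDegree = e i := by
    intro i hi
    simp only [hpdef]
    exact Polynomial.natDegree_C_mul_X_pow (e i) (c'' i) hi
  -- the matrix P
  set P : Matrix (Fin n) (Fin n) (Polynomial k) :=
    (1 : Matrix (Fin n) (Fin n) (Polynomial k)).updateCol JJ p with hPdef
  have hPapp : ∀ a b, P a b = if b = JJ then p a else if a = b then 1 else 0 := by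
    intro a b
    rw [hPdef, Matrix.updateCol_apply]
    by_cases hb : b = JJ
    · simp [hb]
    · simp [hb, Matrix.one_apply]
  have hdetP : P.det = 1 := by
    have hcol : p = fun kk => ∑ i, p i • (1 : Matrix (Fin n) (Fin n) (Polynomial k)) kk i := by
      funext kk
      simp [Matrix.one_apply]
    rw [hPdef, hcol, Matrix.det_updateCol_sum]
    simp [hpJ]
  -- entries of G' = Pᵀ * G * P
  set F : Fin n → Polynomial k := fun j => ∑ b, p b * G b j with hFdef
  have hFi : ∀ i, (∑ b, G i b * p b) = F i := by
    intro i
    rw [hFdef]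
    exact Finset.sum_congr rfl fun b _ => by rw [hsymm i b]; ring
  have hGP : ∀ i j, (G * P) i j = if j = JJ then F i else G i j := by
    intro i j
    rw [Matrix.mul_apply]
    by_cases hj : j = JJ
    · rw [if_pos hj, ← hFi i]
      apply Finset.sum_congr rfl
      intro b _
      rw [hPapp b j, if_pos hj]
    · rw [if_neg hj]
      have : ∀ b, G i b * P b j = if b = j then G i j else 0 := by
        intro b
        rw [hPapp b j, if_neg hj]
        by_cases hb : b = j
        · subst hb; simp
        · simp [hb]
      rw [Finset.sum_congr rfl fun b _ => this b]
      simp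
  have hmul : ∀ i j, (Pᵀ * G * P) i j = ∑ a, P a i * ((G * P) a j) := by
    intro i j
    rw [Matrix.mul_assoc, Matrix.mul_apply]
    exact Finset.sum_congr rfl fun a _ => by rw [Matrix.transpose_apply]
  have hE22 : ∀ i j, i ≠ JJ → j ≠ JJ → (Pᵀ * G * P) i j = G i j := by
    intro i j hi hj
    rw [hmul i j]
    have : ∀ a, P a i * (G * P) a j = if a = i then G i j else 0 := by
      intro a
      rw [hPapp a i, if_neg hi, hGP a j, if_neg hj]
      by_cases ha : a = i
      · subst ha; simp
      · simp [ha]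
    rw [Finset.sum_congr rfl fun a _ => this a]
    simp
  have hE2J : ∀ i, i ≠ JJ → (Pᵀ * G * P) i JJ = F i := by
    intro i hi
    rw [hmul i JJ]
    have : ∀ a, P a i * (G * P) a JJ = if a = i then F i else 0 := by
      intro a
      rw [hPapp a i, if_neg hi, hGP a JJ, if_pos rfl]
      by_cases ha : a = i
      · subst ha; simp
      · simp [ha]
    rw [Finset.sum_congr rfl fun a _ => this a]
    simp
  have hEJ2 : ∀ j, j ≠ JJ → (Pᵀ * G * P) JJ j = F j := by
    intro j hj
    rw [hmul JJ j]
    rw [hFdef]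
    apply Finset.sum_congr rfl
    intro a _
    rw [hPapp a JJ, if_pos rfl, hGP a j, if_neg hj]
  have hEJJ : (Pᵀ * G * P) JJ JJ = ∑ a, p a * F a := by
    rw [hmul JJ JJ]
    apply Finset.sum_congr rfl
    intro a _
    rw [hPapp a JJ, if_pos rfl, hGP a JJ, if_pos rfl]
  -- degree bound for F
  have hF : ∀ j, F j ≠ 0 → 2 * ((F j).natDegree : ℤ) ≤ w JJ + w j - 1 := by
    intro j hne
    have hα : 2 * ((F j).natDegree : ℤ) ≤ w JJ + w j := by
      rw [hFdef] at hne ⊢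
      apply sum_bound Finset.univ _ _ _ hne
      intro b _ hbne
      have hpb : p b ≠ 0 := left_ne_zero_of_mul hbne
      have hgb : G b j ≠ 0 := right_ne_zero_of_mul hbne
      have hcb : c'' b ≠ 0 := by
        intro hz; exact hpb (hp0 b hz)
      rw [Polynomial.natDegree_mul hpb hgb, hpdeg b hcb]
      have h1 := he b hcb
      have h2 := hw b j hgb
      push_cast
      omega
    refine drop_one hne hα ?_
    intro hdvd
    have hcoeff : (F j).coeff (((w JJ + w j)/2).toNat) = ∑ b, lam G w j b * c'' b := by
      rw [hFdef]
      rw [Polynomial.finset_sum_coeff]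
      apply Finset.sum_congr rfl
      intro b _
      by_cases hcb : c'' b = 0
      · rw [hp0 b hcb, zero_mul, hcb, mul_zero]
        simp
      · by_cases hg : G b j = 0
        · rw [hg, mul_zero]
          simp [lam, hsymm j b, hg]
        · have h0 : (0:ℤ) ≤ w b + w j := le_trans (by positivity) (hw b j hg)
          have heb := he b hcb
          have hrw : p b * G b j = (Polynomial.C (c'' b) * G b j) * Polynomial.X ^ (e b) := by
            rw [hpdef]; ring
          rw [hrw, Polynomial.coeff_mul_X_pow']
          have hwb : w b ≤ w JJ := (hpar b hcb).2
          have hle : e b ≤ ((w JJ + w j)/2).toNat := by omega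
          rw [if_pos hle, Polynomial.coeff_C_mul]
          have hTe : ((w JJ + w j)/2).toNat - e b = ((w j + w b)/2).toNat := by omega
          rw [hTe]
          simp only [lam, Matrix.of_apply]
          rw [if_pos (by omega : (2:ℤ) ∣ (w j + w b))]
          rw [hsymm j b]
          ring
    rw [hcoeff]
    exact hker'' j
  -- symmetry of the new Gram matrix
  have hsymG' : (Pᵀ * G * P).IsSymm := by
    show (Pᵀ * G * P)ᵀ = Pᵀ * G * P
    rw [Matrix.transpose_mul, Matrix.transpose_mul, Matrix.transpose_transpose, hsym.eq,
      Matrix.mul_assoc]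
  refine ⟨P, JJ, hdetP, hsymG', ?_⟩
  intro i j hne
  by_cases hi : i = JJ
  · by_cases hj : j = JJ
    · rw [hi, hj] at hne ⊢
      rw [hEJJ] at hne ⊢
      rw [Function.update_self]
      have hb : 2 * (((∑ a, p a * F a).natDegree : ℤ)) ≤ 2 * w JJ - 1 := by
        apply sum_bound Finset.univ _ _ _ hne
        intro a _ hane
        have hpa : p a ≠ 0 := left_ne_zero_of_mul hane
        have hFa : F a ≠ 0 := right_ne_zero_of_mul hane
        have hca : c'' a ≠ 0 := by
          intro hz; exact hpa (hp0 a hz)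
        rw [Polynomial.natDegree_mul hpa hFa, hpdeg a hca]
        have h1 := he a hca
        have h2 := hF a hFa
        push_cast
        omega
      omega
    · rw [hi] at hne ⊢
      rw [hEJ2 j hj] at hne ⊢
      rw [Function.update_self, Function.update_of_ne hj]
      have := hF j hne
      omega
  · by_cases hj : j = JJ
    · rw [hj] at hne ⊢
      rw [hE2J i hi] at hne ⊢
      rw [Function.update_self, Function.update_of_ne hi]
      have := hF i hne
      omega
    · rw [hE22 i j hi hj] at hne ⊢
      rw [Function.update_of_ne hi, Function.update_of_ne hj]
      exact hw i j hne

lemma det_eq_zero_of_sum_neg {n : ℕ} (G : Matrix (Fin n) (Fin n) (Polynomial k)) (w : Fin n → ℤ)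
    (hw : ∀ i j, G i j ≠ 0 → 2 * ((G i j).natDegree : ℤ) ≤ w i + w j)
    (hs : ∑ i, w i < 0) : G.det = 0 := by
  rw [Matrix.det_apply]
  apply Finset.sum_eq_zero
  intro σ _
  have hsum : ∑ i, (w (σ i) + w i) = 2 * ∑ i, w i := by
    rw [Finset.sum_add_distrib, Equiv.sum_comp σ w]; ring
  have hex : ∃ i, w (σ i) + w i < 0 := by
    by_contra hno
    push_neg at hno
    have : (0:ℤ) ≤ ∑ i, (w (σ i) + w i) := Finset.sum_nonneg fun i _ => hno i
    omega
  obtain ⟨i, hi⟩ := hex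
  have hz : G (σ i) i = 0 := by
    by_contra hne
    have := hw (σ i) i hne
    have : (0:ℤ) ≤ 2 * ((G (σ i) i).natDegree : ℤ) := by positivity
    omega
  have hzero : (∏ x, G (σ x) x) = 0 := Finset.prod_eq_zero (Finset.mem_univ i) hz
  rw [hzero, smul_zero]

lemma det_coeff_top {n : ℕ} (G : Matrix (Fin n) (Fin n) (Polynomial k)) (w : Fin n → ℤ)
    (hw : ∀ i j, G i j ≠ 0 → 2 * ((G i j).natDegree : ℤ) ≤ w i + w j)
    (hs : 0 ≤ ∑ i, w i) :
    G.det.coeff (∑ i, w i).toNat = (lam G w).det := by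
  rw [Matrix.det_apply, Matrix.det_apply (lam G w), Polynomial.finset_sum_coeff]
  apply Finset.sum_congr rfl
  intro σ _
  rw [Polynomial.coeff_smul]
  congr 1
  have hsum : ∑ i, (w (σ i) + w i) = 2 * ∑ i, w i := by
    rw [Finset.sum_add_distrib, Equiv.sum_comp σ w]; ring
  by_cases hall : ∀ i, 0 ≤ w (σ i) + w i
  · have hcast : ∑ i, (w (σ i) + w i).toNat = 2 * (∑ i, w i).toNat := by
      have : ((∑ i, (w (σ i) + w i).toNat : ℕ) : ℤ) = ∑ i, (w (σ i) + w i) := by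
        push_cast
        exact Finset.sum_congr rfl fun i _ => Int.toNat_of_nonneg (hall i)
      omega
    rw [prod_coeff_half Finset.univ _ (fun i => (w (σ i) + w i).toNat)
      (fun i _ hne => by have := hw (σ i) i hne; omega) _
      (by omega)]
    apply Finset.prod_congr rfl
    intro i _
    simp only [lam, Matrix.of_apply]
    have h0 : 0 ≤ w (σ i) + w i := hall i
    by_cases hdvd : (2:ℤ) ∣ (w (σ i) + w i)
    · rw [if_pos hdvd, if_pos (by omega)]
      congr 1
      omega
    · rw [if_neg hdvd, if_neg (by omega)]
  · push_neg at hall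
    obtain ⟨i, hi⟩ := hall
    have hz : G (σ i) i = 0 := by
      by_contra hne
      have := hw (σ i) i hne
      have : (0:ℤ) ≤ 2 * ((G (σ i) i).natDegree : ℤ) := by positivity
      omega
    have hz1 : (∏ x, G (σ x) x) = 0 := Finset.prod_eq_zero (Finset.mem_univ i) hz
    have hz2 : (∏ x, lam G w (σ x) x) = 0 :=
      Finset.prod_eq_zero (Finset.mem_univ i) (by simp [lam, hz])
    rw [hz1, hz2]
    simp

lemma dot_single {n : ℕ} (G : Matrix (Fin n) (Fin n) (Polynomial k)) (i j : Fin n) :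
    (Pi.single i 1) ⬝ᵥ G *ᵥ (Pi.single j (1 : Polynomial k)) = G i j := by
  simp [Matrix.mulVec, dotProduct, Pi.single_apply]

/-- endgame: the leading form is nonsingular -/
lemma endgame (h2 : (2:k) ≠ 0) {n : ℕ} (hn : 0 < n)
    (G : Matrix (Fin n) (Fin n) (Polynomial k)) (hsym : G.IsSymm) (hdet : IsUnit G.det)
    (w : Fin n → ℤ) (hw : ∀ i j, G i j ≠ 0 → 2 * ((G i j).natDegree : ℤ) ≤ w i + w j)
    (h0 : 0 ≤ ∑ i, w i) (hΛ : (lam G w).det ≠ 0) :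
    ∃ v : Fin n → Polynomial k,
      IsUnit (v ⬝ᵥ G *ᵥ v) ∨ (v ⬝ᵥ G *ᵥ v = 0 ∧ ∃ f, v ⬝ᵥ f = 1) := by
  classical
  have hcoeff := det_coeff_top G w hw h0
  obtain ⟨δ, hδu, hδ⟩ := Polynomial.isUnit_iff.mp hdet
  have hsum0 : ∑ i, w i = 0 := by
    by_contra hne
    have hpos : 0 < (∑ i, w i).toNat := by omega
    rw [← hδ, Polynomial.coeff_C, if_neg (by omega)] at hcoeff
    exact hΛ hcoeff.symm
  by_cases hex : ∃ i, w i < 0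
  · obtain ⟨i, hi⟩ := hex
    have hGii : G i i = 0 := by
      by_contra hne
      have := hw i i hne
      have : (0:ℤ) ≤ 2 * ((G i i).natDegree : ℤ) := by positivity
      omega
    refine ⟨Pi.single i 1, Or.inr ⟨?_, Pi.single i 1, ?_⟩⟩
    · rw [dot_single, hGii]
    · simp [dotProduct, Pi.single_apply]
  · push_neg at hex
    have hallz : ∀ i, w i = 0 := by
      intro i
      have := (Finset.sum_eq_zero_iff_of_nonneg (fun i _ => hex i)).mp hsum0 i (Finset.mem_univ i)
      omega
    have hconst : ∀ i j, ∃ a : k, G i j = Polynomial.C a := by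
      intro i j
      by_cases hz : G i j = 0
      · exact ⟨0, by simp [hz]⟩
      · have := hw i j hz
        rw [hallz i, hallz j] at this
        have hdeg : (G i j).natDegree = 0 := by omega
        obtain ⟨a, ha⟩ := Polynomial.natDegree_eq_zero.mp hdeg
        exact ⟨a, ha.symm⟩
    by_cases hdiag : ∃ i, G i i ≠ 0
    · obtain ⟨i, hi⟩ := hdiag
      obtain ⟨a, ha⟩ := hconst i i
      refine ⟨Pi.single i 1, Or.inl ?_⟩
      rw [dot_single, ha]
      rw [Polynomial.isUnit_C]
      apply isUnit_iff_ne_zero.mpr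
      intro haz
      exact hi (by rw [ha, haz, map_zero])
    · push_neg at hdiag
      by_cases hoff : ∃ i j, G i j ≠ 0
      · obtain ⟨i, j, hij⟩ := hoff
        obtain ⟨a, ha⟩ := hconst i j
        have hane : a ≠ 0 := by
          intro haz
          exact hij (by rw [ha, haz, map_zero])
        refine ⟨Pi.single i 1 + Pi.single j 1, Or.inl ?_⟩
        have hval : (Pi.single i 1 + Pi.single j 1) ⬝ᵥ G *ᵥ (Pi.single i (1:Polynomial k) + Pi.single j 1)
            = G i i + G i j + (G j i + G j j) := by
          rw [Matrix.mulVec_add, dotProduct_add, add_dotProduct,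
            add_dotProduct, dot_single, dot_single, dot_single, dot_single]
          ring
        rw [hval, hdiag i, hdiag j, hsym.apply i j]
        -- goal : IsUnit (0 + G i j + (G i j + 0))  (note hsym.apply j i : G i j = G j i ?)
        rw [ha]
        have heq : (0 : Polynomial k) + Polynomial.C a + (Polynomial.C a + 0) = Polynomial.C (2 * a) := by
          rw [zero_add, add_zero, ← Polynomial.C_add, two_mul]
        rw [heq, Polynomial.isUnit_C]
        exact isUnit_iff_ne_zero.mpr (mul_ne_zero h2 hane)
      · push_neg at hoff
        exfalso
        have hG0 : G = 0 := by
          funext i j; exact hoff i j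
        rw [hG0, (haveI : Nonempty (Fin n) := ⟨⟨0, hn⟩⟩; Matrix.det_zero)] at hdet
        exact (not_isUnit_zero : ¬ IsUnit (0 : Polynomial k)) hdet

lemma pullback {n : ℕ} (G P : Matrix (Fin n) (Fin n) (Polynomial k)) (hdP : P.det = 1)
    (h : ∃ v : Fin n → Polynomial k,
      IsUnit (v ⬝ᵥ (Pᵀ * G * P) *ᵥ v) ∨ (v ⬝ᵥ (Pᵀ * G * P) *ᵥ v = 0 ∧ ∃ f, v ⬝ᵥ f = 1)) :
    ∃ v : Fin n → Polynomial k,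
      IsUnit (v ⬝ᵥ G *ᵥ v) ∨ (v ⬝ᵥ G *ᵥ v = 0 ∧ ∃ f, v ⬝ᵥ f = 1) := by
  obtain ⟨v', hv'⟩ := h
  have hval : v' ⬝ᵥ (Pᵀ * G * P) *ᵥ v' = (P *ᵥ v') ⬝ᵥ G *ᵥ (P *ᵥ v') := by
    rw [← Matrix.mulVec_mulVec, ← Matrix.mulVec_mulVec, Matrix.dotProduct_mulVec,
      Matrix.vecMul_transpose]
  refine ⟨P *ᵥ v', ?_⟩
  rcases hv' with h1 | ⟨h1, f', hf'⟩
  · exact Or.inl (hval ▸ h1)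
  · refine Or.inr ⟨hval ▸ h1, (P⁻¹)ᵀ *ᵥ f', ?_⟩
    have hPu : IsUnit P.det := by rw [hdP]; exact isUnit_one
    have : (P *ᵥ v') ⬝ᵥ ((P⁻¹)ᵀ *ᵥ f') = v' ⬝ᵥ ((Pᵀ * (P⁻¹)ᵀ) *ᵥ f') := by
      rw [← Matrix.mulVec_mulVec, Matrix.dotProduct_mulVec v', Matrix.vecMul_transpose]
    rw [this, ← Matrix.transpose_mul, Matrix.nonsing_inv_mul P hPu, Matrix.transpose_one,
      Matrix.one_mulVec, hf']

lemma key_aux (h2 : (2:k) ≠ 0) {n : ℕ} (hn : 0 < n) (N : ℕ) :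
    ∀ (G : Matrix (Fin n) (Fin n) (Polynomial k)), G.IsSymm → IsUnit G.det →
    ∀ (w : Fin n → ℤ), (∀ i j, G i j ≠ 0 → 2 * ((G i j).natDegree : ℤ) ≤ w i + w j) →
    (∑ i, w i) ≤ N →
    ∃ v : Fin n → Polynomial k,
      IsUnit (v ⬝ᵥ G *ᵥ v) ∨ (v ⬝ᵥ G *ᵥ v = 0 ∧ ∃ f, v ⬝ᵥ f = 1) := by
  induction N with
  | zero =>
    intro G hsym hdet w hw hN
    have h0 : 0 ≤ ∑ i, w i := by
      by_contra hneg
      rw [det_eq_zero_of_sum_neg G w hw (by omega)] at hdet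
      exact not_isUnit_zero hdet
    by_cases hΛ : (lam G w).det ≠ 0
    · exact endgame h2 hn G hsym hdet w hw h0 hΛ
    · push_neg at hΛ
      obtain ⟨c, hc0, hcker⟩ := Matrix.exists_mulVec_eq_zero_iff.mpr hΛ
      obtain ⟨P, J, hdP, hsym', hw'⟩ := step G hsym w hw c hc0 hcker
      exfalso
      have hdet' : IsUnit (Pᵀ * G * P).det := by
        have : (Pᵀ * G * P).det = G.det := by
          rw [Matrix.det_mul, Matrix.det_mul, Matrix.det_transpose, hdP]
          ring
        rwa [this]
      have hsum' : ∑ i, Function.update w J (w J - 1) i = (∑ i, w i) - 1 := by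
        rw [Finset.sum_update_of_mem (Finset.mem_univ J)]
        rw [← Finset.sum_erase_add _ _ (Finset.mem_univ J)]
        rw [Finset.sdiff_singleton_eq_erase]
        ring
      rw [det_eq_zero_of_sum_neg _ _ hw' (by omega)] at hdet'
      exact not_isUnit_zero hdet'
  | succ N ih =>
    intro G hsym hdet w hw hN
    have h0 : 0 ≤ ∑ i, w i := by
      by_contra hneg
      rw [det_eq_zero_of_sum_neg G w hw (by omega)] at hdet
      exact not_isUnit_zero hdet
    by_cases hΛ : (lam G w).det ≠ 0
    · exact endgame h2 hn G hsym hdet w hw h0 hΛ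
    · push_neg at hΛ
      obtain ⟨c, hc0, hcker⟩ := Matrix.exists_mulVec_eq_zero_iff.mpr hΛ
      obtain ⟨P, J, hdP, hsym', hw'⟩ := step G hsym w hw c hc0 hcker
      have hdet' : IsUnit (Pᵀ * G * P).det := by
        have : (Pᵀ * G * P).det = G.det := by
          rw [Matrix.det_mul, Matrix.det_mul, Matrix.det_transpose, hdP]
          ring
        rwa [this]
      have hsum' : ∑ i, Function.update w J (w J - 1) i = (∑ i, w i) - 1 := by
        rw [Finset.sum_update_of_mem (Finset.mem_univ J)]
        rw [← Finset.sum_erase_add _ _ (Finset.mem_univ J)]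
        rw [Finset.sdiff_singleton_eq_erase]
        ring
      exact pullback G P hdP (ih _ hsym' hdet' _ hw' (by push_cast at hN ⊢; omega))

lemma key (h2 : (2:k) ≠ 0) {n : ℕ} (hn : 0 < n) (G : Matrix (Fin n) (Fin n) (Polynomial k))
    (hsym : G.IsSymm) (hdet : IsUnit G.det) :
    ∃ v : Fin n → Polynomial k,
      IsUnit (v ⬝ᵥ G *ᵥ v) ∨ (v ⬝ᵥ G *ᵥ v = 0 ∧ ∃ f, v ⬝ᵥ f = 1) := by
  classical
  set B : ℕ := Finset.univ.sup (fun p : Fin n × Fin n => (G p.1 p.2).natDegree) with hB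
  apply key_aux h2 hn (n * B) G hsym hdet (fun _ => (B:ℤ))
  · intro i j _
    have : (G i j).natDegree ≤ B := by
      rw [hB]
      exact Finset.le_sup (f := fun p : Fin n × Fin n => (G p.1 p.2).natDegree)
        (Finset.mem_univ (i, j))
    omega
  · have hsc : (∑ _i : Fin n, (B:ℤ)) = (n:ℤ) * B := by
      rw [Finset.sum_const, Finset.card_univ, Fintype.card_fin]
      ring
    rw [hsc]
    push_cast
    exact le_refl _

section ModuleLevel

variable {M : Type} [AddCommGroup M] [Module (Polynomial k) M]

lemma dot_eval (β : M →ₗ[Polynomial k] M →ₗ[Polynomial k] Polynomial k)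
    {n : ℕ} (b : Basis (Fin n) (Polynomial k) M) (x y : Fin n → Polynomial k) :
    β (∑ i, x i • b i) (∑ j, y j • b j) =
      x ⬝ᵥ (Matrix.of fun i j => β (b i) (b j)) *ᵥ y := by
  simp only [map_sum, LinearMap.sum_apply, dotProduct, Matrix.mulVec,
    Matrix.of_apply, Finset.mul_sum]
  rw [Finset.sum_comm]
  refine Finset.sum_congr rfl fun i _ => Finset.sum_congr rfl fun j _ => ?_
  simp only [LinearMap.map_smul₂, _root_.map_smul, LinearMap.smul_apply, smul_eq_mul]
  ring

lemma gram_unit (β : M →ₗ[Polynomial k] M →ₗ[Polynomial k] Polynomial k)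
    {n : ℕ} (b : Basis (Fin n) (Polynomial k) M)
    (hunim : Function.Bijective β) :
    IsUnit (Matrix.of fun i j => β (b i) (b j)).det := by
  have h := LinearEquiv.isUnit_det (LinearEquiv.ofBijective β hunim) b b.dualBasis
  have heq : (LinearMap.toMatrix b b.dualBasis
      ((LinearEquiv.ofBijective β hunim :
        M ≃ₗ[Polynomial k] Module.Dual (Polynomial k) M) :
        M →ₗ[Polynomial k] Module.Dual (Polynomial k) M))
      = (Matrix.of fun i j => β (b i) (b j))ᵀ := by
    ext i j
    rw [LinearMap.toMatrix_apply]
    simp [Basis.dualBasis_repr, LinearEquiv.ofBijective_apply]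
  rw [heq] at h
  rwa [Matrix.det_transpose] at h

lemma exists_unit_vector (h2 : (2:k) ≠ 0) {n : ℕ}
    (β : M →ₗ[Polynomial k] M →ₗ[Polynomial k] Polynomial k)
    (b : Basis (Fin (n+1)) (Polynomial k) M)
    (hsymm : ∀ x y, β x y = β y x) (hunim : Function.Bijective β) :
    ∃ v : M, IsUnit (β v v) := by
  obtain ⟨v, hv⟩ := key h2 (Nat.succ_pos n) (Matrix.of fun i j => β (b i) (b j))
    (Matrix.IsSymm.ext fun i j => hsymm (b j) (b i))
    (gram_unit β b hunim)
  rcases hv with hunit | ⟨hzero, f, hf⟩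
  · exact ⟨∑ i, v i • b i, by rw [dot_eval β b v v]; exact hunit⟩
  · -- isotropic vector: build a hyperbolic pair
    set z : M := ∑ i, v i • b i with hzdef
    have hzz : β z z = 0 := by rw [hzdef, dot_eval β b v v]; exact hzero
    set ξ : M →ₗ[Polynomial k] Polynomial k := ∑ i, f i • b.coord i with hξdef
    have hξz : ξ z = 1 := by
      rw [hξdef]
      rw [LinearMap.sum_apply]
      have : ∀ i, (f i • b.coord i) z = v i * f i := by
        intro i
        rw [LinearMap.smul_apply, Basis.coord_apply, hzdef, Basis.repr_sum_self]
        simp [mul_comm]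
      rw [Finset.sum_congr rfl fun i _ => this i]
      rw [← hf]
      rfl
    obtain ⟨y, hy⟩ := hunim.2 ξ
    have hyz : β y z = 1 := by rw [hy]; exact hξz
    have hzy : β z y = 1 := by rw [hsymm z y]; exact hyz
    set h : Polynomial k := Polynomial.C (2⁻¹ : k) * β y y with hhdef
    have hCC : Polynomial.C (2⁻¹ : k) * (2 : Polynomial k) = 1 := by
      have h2' : (2 : Polynomial k) = Polynomial.C (2 : k) := (map_ofNat Polynomial.C 2).symm
      rw [h2', ← Polynomial.C_mul, inv_mul_cancel₀ h2, Polynomial.C_1]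
    set y' : M := y - h • z with hy'def
    have hy'y' : β y' y' = 0 := by
      have expand : β y' y' = β y y - h * β z y - h * β y z + h * (h * β z z) := by
        rw [hy'def]
        simp only [map_sub, _root_.map_smul, LinearMap.sub_apply, LinearMap.smul_apply, smul_eq_mul]
        ring
      rw [expand, hzz, hyz, hzy, hhdef]
      linear_combination (-((β y) y)) * hCC
    have hzy' : β z y' = 1 := by
      rw [hy'def]
      simp only [map_sub, _root_.map_smul, LinearMap.sub_apply, LinearMap.smul_apply, smul_eq_mul]
      rw [hzy, hzz]
      ring
    have hy'z : β y' z = 1 := by rw [hsymm y' z]; exact hzy'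
    refine ⟨z + y', ?_⟩
    have hval : β (z + y') (z + y') = β z z + β z y' + β y' z + β y' y' := by
      simp only [map_add, LinearMap.add_apply]
      ring
    rw [hval, hzz, hzy', hy'z, hy'y']
    have : (0 : Polynomial k) + 1 + 1 + 0 = (2 : Polynomial k) := by ring
    rw [this]
    have h2' : (2 : Polynomial k) = Polynomial.C (2 : k) := (map_ofNat Polynomial.C 2).symm
    rw [h2', Polynomial.isUnit_C]
    exact isUnit_iff_ne_zero.mpr h2

end ModuleLevel

lemma main (h2 : (2:k) ≠ 0) : ∀ (n : ℕ) {M : Type} [AddCommGroup M]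
    [Module (Polynomial k) M]
    (β : M →ₗ[Polynomial k] M →ₗ[Polynomial k] Polynomial k),
    (∀ x y, β x y = β y x) → Function.Bijective β →
    ∀ (_ : Basis (Fin n) (Polynomial k) M),
    ∃ q : Basis (Fin n) (Polynomial k) M, ∀ i j, i ≠ j → β (q i) (q j) = 0 := by
  intro n
  induction n with
  | zero =>
    intro M _ _ β _ _ b
    exact ⟨b, fun i j _ => i.elim0⟩
  | succ n ih =>
    intro M _ _ β hsymm hunim b
    obtain ⟨v, hv⟩ := exists_unit_vector h2 β b hsymm hunim
    set N : Submodule (Polynomial k) M := LinearMap.ker (β v) with hNdef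
    have hmemN : ∀ x : M, x ∈ N ↔ β v x = 0 := fun x => LinearMap.mem_ker
    have hli : ∀ (c : Polynomial k), ∀ x ∈ N, c • v + x = 0 → c = 0 := by
      intro c x hx hce
      have hc := congrArg (β v) hce
      simp only [map_add, _root_.map_smul, map_zero, smul_eq_mul] at hc
      rw [(hmemN x).mp hx, add_zero] at hc
      rcases mul_eq_zero.mp hc with h | h
      · exact h
      · exact absurd h hv.ne_zero
    set w : Polynomial k := ((hv.unit⁻¹ : (Polynomial k)ˣ) : Polynomial k) with hwdef
    have hw : w * β v v = 1 := hv.val_inv_mul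
    have hsp : ∀ z : M, ∃ c : Polynomial k, z + c • v ∈ N := by
      intro z
      refine ⟨-(w * β v z), ?_⟩
      rw [hmemN]
      simp only [map_add, _root_.map_smul, smul_eq_mul]
      linear_combination (-(β v z)) * hw
    obtain ⟨m, bN⟩ := Submodule.basisOfPid b N
    have hmn : m = n := by
      have h1 : Module.finrank (Polynomial k) M = n + 1 := by
        rw [Module.finrank_eq_card_basis b, Fintype.card_fin]
      have h2' : Module.finrank (Polynomial k) M = m + 1 := by
        rw [Module.finrank_eq_card_basis (Basis.mkFinCons v bN hli hsp), Fintype.card_fin]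
      omega
    set β' := LinearMap.domRestrict₁₂ β N N with hβ'def
    have hβ'app : ∀ (x y : N), β' x y = β (x:M) (y:M) := fun x y =>
      LinearMap.domRestrict₁₂_apply β N N x y
    have hsymm' : ∀ x y : N, β' x y = β' y x := by
      intro x y
      rw [hβ'app, hβ'app]
      exact hsymm _ _
    have hinj : Function.Injective β' := by
      intro x y hxy
      apply Subtype.ext
      apply hunim.1
      apply LinearMap.ext
      intro z
      obtain ⟨c, hc⟩ := hsp z
      have hx0 : β (x:M) v = 0 := by rw [hsymm]; exact (hmemN _).mp x.2
      have hy0 : β (y:M) v = 0 := by rw [hsymm]; exact (hmemN _).mp y.2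
      have heq : β (x:M) (z + c • v) = β (y:M) (z + c • v) := by
        have happ := LinearMap.congr_fun hxy (⟨z + c • v, hc⟩ : N)
        rw [hβ'app, hβ'app] at happ
        exact happ
      have hx1 : β (x:M) z = β (x:M) (z + c • v) := by
        rw [map_add, _root_.map_smul, smul_eq_mul, hx0, mul_zero, add_zero]
      have hy1 : β (y:M) z = β (y:M) (z + c • v) := by
        rw [map_add, _root_.map_smul, smul_eq_mul, hy0, mul_zero, add_zero]
      rw [hx1, hy1, heq]
    have hsurj : Function.Surjective β' := by
      intro f
      set φ : M →ₗ[Polynomial k] M :=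
        LinearMap.id - LinearMap.smulRight (w • β v) v with hφdef
      have hφapp : ∀ z, φ z = z - (w * β v z) • v := by
        intro z
        rw [hφdef]
        simp [LinearMap.smulRight_apply, smul_eq_mul]
      have hφmem : ∀ z, φ z ∈ N := by
        intro z
        rw [hmemN, hφapp]
        simp only [map_sub, _root_.map_smul, smul_eq_mul]
        linear_combination (-(β v z)) * hw
      set πl : M →ₗ[Polynomial k] N := LinearMap.codRestrict N φ hφmem with hπdef
      have hπapp : ∀ z, ((πl z : N) : M) = φ z := fun z => rfl
      obtain ⟨y, hy⟩ := hunim.2 (f.comp πl)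
      have hyN : y ∈ N := by
        rw [hmemN]
        rw [hsymm v y]
        have h3 : β y v = (f.comp πl) v := by rw [hy]
        rw [h3, LinearMap.comp_apply]
        have hπv : πl v = 0 := by
          apply Subtype.ext
          rw [hπapp]
          rw [hφapp]
          rw [hw, one_smul, sub_self]
          rfl
        rw [hπv, map_zero]
      refine ⟨⟨y, hyN⟩, ?_⟩
      apply LinearMap.ext
      intro x
      rw [hβ'app]
      have h3 : β y (x:M) = (f.comp πl) (x:M) := by rw [hy]
      rw [h3, LinearMap.comp_apply]
      have hπx : πl (x:M) = x := by
        apply Subtype.ext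
        rw [hπapp, hφapp, (hmemN x).mp x.2, mul_zero, zero_smul, sub_zero]
      rw [hπx]
    obtain ⟨q', hq'⟩ := ih β' hsymm' ⟨hinj, hsurj⟩ (bN.reindex (finCongr hmn))
    refine ⟨Basis.mkFinCons v q' hli hsp, ?_⟩
    intro i j hij
    simp only [Basis.coe_mkFinCons]
    rcases Fin.eq_zero_or_eq_succ i with hi | ⟨i', hi⟩ <;>
      rcases Fin.eq_zero_or_eq_succ j with hj | ⟨j', hj⟩
    · exact absurd (hi.trans hj.symm) hij
    · rw [hi, hj, Fin.cons_zero, Fin.cons_succ]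
      exact (hmemN _).mp (q' j').2
    · rw [hi, hj, Fin.cons_zero, Fin.cons_succ]
      rw [hsymm]
      exact (hmemN _).mp (q' i').2
    · rw [hi, hj, Fin.cons_succ, Fin.cons_succ]
      have hne : i' ≠ j' := by
        intro hcon
        rw [hi, hj, hcon] at hij
        exact hij rfl
      have := hq' i' j' hne
      rw [hβ'app] at this
      exact this

lemma diag_units {M : Type} [AddCommGroup M] [Module (Polynomial k) M]
    (β : M →ₗ[Polynomial k] M →ₗ[Polynomial k] Polynomial k)
    {n : ℕ} (hunim : Function.Bijective β)
    (q : Basis (Fin n) (Polynomial k) M)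
    (horth : ∀ i j, i ≠ j → β (q i) (q j) = 0) (i : Fin n) :
    ∃ u : k, u ≠ 0 ∧ β (q i) (q i) = Polynomial.C u := by
  obtain ⟨v, hv⟩ := hunim.2 (q.coord i)
  have h1 : β v (q i) = 1 := by rw [hv]; simp [Basis.coord_apply]
  have h2 : β v (q i) = (q.repr v i) * β (q i) (q i) := by
    conv_lhs => rw [← q.sum_repr v]
    rw [map_sum]
    rw [LinearMap.sum_apply]
    rw [Finset.sum_eq_single i]
    · simp [mul_comm]
    · intro j _ hj
      simp [horth j i hj]
    · simp
  have hu : IsUnit (β (q i) (q i)) :=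
    IsUnit.of_mul_eq_one _ (by rw [mul_comm, ← h2, h1])
  obtain ⟨u, hu1, hu2⟩ := Polynomial.isUnit_iff.mp hu
  exact ⟨u, hu1.ne_zero, hu2.symm⟩

end HarderDjokovic


/-- **Harder/Djoković.**  Let `k` be a field of characteristic `≠ 2`, `M` a free
`k[x]`-module of finite rank `n`, and `β` a unimodular symmetric bilinear form on
`M`.  Then `M` admits a `β`-orthogonal basis, and for every orthogonal basis
`q₁,…,q_n` the values `β(qᵢ,qᵢ)` are nonzero constants in `k`. -/
theorem harder_djokovic_diagonalization
    {k : Type} [Field k] (hchar : (2 : k) ≠ 0)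
    {M : Type} [AddCommGroup M] [Module (Polynomial k) M]
    (n : ℕ) (b : Module.Basis (Fin n) (Polynomial k) M)
    (β : M →ₗ[Polynomial k] M →ₗ[Polynomial k] Polynomial k)
    (hsymm : ∀ x y, β x y = β y x)
    (hunim : Function.Bijective β) :
    (∃ q : Module.Basis (Fin n) (Polynomial k) M, ∀ i j, i ≠ j → β (q i) (q j) = 0) ∧
    (∀ q : Module.Basis (Fin n) (Polynomial k) M, (∀ i j, i ≠ j → β (q i) (q j) = 0) →
      ∀ i, ∃ u : k, u ≠ 0 ∧ β (q i) (q i) = Polynomial.C u) := by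
  exact ⟨main hchar n β hsymm hunim b, fun q h i => diag_units β hunim q h i⟩
end

section
/- Let K be a field with a valuation v whose residue field is formally real, and let M be a nonzero symmetric n×n matrix over K with characteristic polynomial det(tI − M) = tⁿ + a_{n−1}t^{n−1} + ⋯ + a₀. Then v(M) := min over entries of v equals min over 0 ≤ i < n of v(a_i)/(n−i); in particular there exists i < n with v(a_i) = (n−i)·v(M). -/
open Polynomial Matrix

private lemma aux_comp_C_mul_X_coeff {R : Type*} [CommRing R] (p : R[X]) (c : R) (i : ℕ) :
    (p.comp (C c * X)).coeff i = p.coeff i * c ^ i := by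
  induction p using Polynomial.induction_on' with
  | add p q hp hq => simp [hp, hq, add_mul]
  | monomial e a =>
    have he : C a * (C c * X) ^ e = C (a * c ^ e) * X ^ e := by
      rw [mul_pow, ← C_pow, ← mul_assoc, ← C_mul]
    rw [monomial_comp, he, coeff_C_mul, coeff_X_pow, coeff_monomial]
    by_cases h : i = e
    · subst h; simp [mul_comm]
    · simp [h, Ne.symm h]

private lemma aux_charpoly_smul_coeff {K : Type*} [Field K] {n : ℕ}
    (N : Matrix (Fin n) (Fin n) K) (c : K) (hc : c ≠ 0) (i : ℕ) (hi : i ≤ n) :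
    (c • N).charpoly.coeff i = c ^ (n - i) * N.charpoly.coeff i := by
  classical
  set φ : K[X] →+* K[X] := eval₂RingHom C (C c * X) with hφ
  have hmap : (charmatrix (c • N)).map φ = C c • charmatrix N := by
    ext a b
    by_cases h : a = b
    · subst h
      simp only [Matrix.map_apply, charmatrix_apply_eq, Matrix.smul_apply,
        Matrix.smul_apply, smul_eq_mul, hφ, coe_eval₂RingHom, eval₂_sub, eval₂_X, eval₂_C]
      rw [mul_sub, ← C_mul]
    · simp only [Matrix.map_apply, charmatrix_apply_ne _ _ _ h, Matrix.smul_apply,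
        smul_eq_mul, hφ, coe_eval₂RingHom, eval₂_neg, eval₂_C]
      rw [mul_neg, ← C_mul]
  have key : φ ((c • N).charpoly) = C (c ^ n) * N.charpoly := by
    rw [Matrix.charpoly, RingHom.map_det, RingHom.mapMatrix_apply, hmap, Matrix.det_smul,
      Matrix.charpoly]
    rw [Fintype.card_fin, ← C_pow]
  have hcoeff := congrArg (fun p => Polynomial.coeff p i) key
  simp only [coeff_C_mul] at hcoeff
  have hl : (φ ((c • N).charpoly)).coeff i = (c • N).charpoly.coeff i * c ^ i := by
    have h2 : φ ((c • N).charpoly) = ((c • N).charpoly).comp (C c * X) := rfl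
    rw [h2, aux_comp_C_mul_X_coeff]
  rw [hl] at hcoeff
  have hpow : c ^ (n - i) * c ^ i = c ^ n := by rw [← pow_add, Nat.sub_add_cancel hi]
  apply mul_right_cancel₀ (pow_ne_zero i hc)
  rw [hcoeff, mul_right_comm, hpow]

private lemma aux_sum_sq_ne_zero {F : Type*} [Field F] (hs : ¬ IsSumSq (-1 : F))
    {ι : Type*} [Fintype ι] (x : ι → F) (j : ι) (hj : x j ≠ 0) :
    ∑ i, x i * x i ≠ 0 := by
  intro h0
  apply hs
  set y : ι → F := fun i => x i * (x j)⁻¹ with hy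
  have hsum : ∑ i, y i * y i = 0 := by
    have hterm : ∀ i, y i * y i = (x i * x i) * ((x j)⁻¹ * (x j)⁻¹) := fun i => by
      rw [hy]; ring
    rw [Finset.sum_congr rfl fun i _ => hterm i, ← Finset.sum_mul, h0, zero_mul]
  have hyj : y j * y j = 1 := by
    rw [hy]; field_simp
  classical
  have h2 : y j * y j + ∑ i ∈ Finset.univ.erase j, y i * y i = ∑ i, y i * y i :=
    by exact Finset.add_sum_erase _ (fun i => y i * y i) (Finset.mem_univ j)
  rw [hsum, hyj] at h2
  have h1 : (-1 : F) = ∑ i ∈ Finset.univ.erase j, y i * y i := by linear_combination -h2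
  rw [h1]
  exact IsSumSq.sum_mul_self _ _

private lemma aux_sq_ne_zero {F : Type*} [Field F] (hs : ¬ IsSumSq (-1 : F))
    {m : ℕ} {A : Matrix (Fin m) (Fin m) F} (hA : A.IsSymm) (h0 : A ≠ 0) :
    A * A ≠ 0 := by
  obtain ⟨i, j, hij⟩ : ∃ i j, A i j ≠ 0 := by
    by_contra h
    push_neg at h
    exact h0 (by ext a b; simp [h])
  have htr : (A * A).trace ≠ 0 := by
    have ht : (A * A).trace = ∑ p : Fin m × Fin m, A p.1 p.2 * A p.1 p.2 := by
      rw [Matrix.trace, Fintype.sum_prod_type]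
      refine Finset.sum_congr rfl fun a _ => ?_
      rw [Matrix.diag_apply, Matrix.mul_apply]
      refine Finset.sum_congr rfl fun b _ => ?_
      rw [hA.apply a b]
    rw [ht]
    exact aux_sum_sq_ne_zero hs _ (i, j) hij
  intro h
  rw [h] at htr
  simp at htr

private lemma aux_not_nilpotent {F : Type*} [Field F] (hs : ¬ IsSumSq (-1 : F))
    {m : ℕ} {A : Matrix (Fin m) (Fin m) F} (hA : A.IsSymm) (h0 : A ≠ 0) :
    ¬ IsNilpotent A := by
  rintro ⟨t, ht⟩
  have key : ∀ k, A ^ (2 ^ k) ≠ 0 ∧ (A ^ (2 ^ k)).IsSymm := by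
    intro k
    induction k with
    | zero => simpa using ⟨h0, hA⟩
    | succ k ih =>
      have h2 : A ^ 2 ^ (k + 1) = A ^ 2 ^ k * A ^ 2 ^ k := by
        rw [← pow_add, pow_succ, mul_two]
      exact ⟨by rw [h2]; exact aux_sq_ne_zero hs ih.2 ih.1, hA.pow _⟩
  have hle : t ≤ 2 ^ t := Nat.le_of_lt (Nat.lt_two_pow_self)
  have hz : A ^ 2 ^ t = 0 := by
    rw [← Nat.sub_add_cancel hle, pow_add, ht, mul_zero]
  exact (key t).1 hz

private lemma aux_exists_coeff {F : Type*} [Field F] (hs : ¬ IsSumSq (-1 : F))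
    {m : ℕ} {A : Matrix (Fin m) (Fin m) F} (hA : A.IsSymm) (h0 : A ≠ 0) :
    ∃ i < m, A.charpoly.coeff i ≠ 0 := by
  by_contra h
  push_neg at h
  apply aux_not_nilpotent hs hA h0
  refine ⟨m, ?_⟩
  have hdeg : A.charpoly.natDegree = m := by
    rw [Matrix.charpoly_natDegree_eq_dim, Fintype.card_fin]
  have hcp : A.charpoly = X ^ m := by
    ext j
    rcases lt_trichotomy j m with hj | hj | hj
    · rw [h j hj, coeff_X_pow, if_neg (by omega)]
    · subst hj
      rw [coeff_X_pow, if_pos rfl]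
      have hmon := A.charpoly_monic.coeff_natDegree
      rwa [hdeg] at hmon
    · rw [coeff_X_pow, if_neg (by omega), coeff_eq_zero_of_natDegree_lt]
      omega
  have haev := A.aeval_self_charpoly
  rw [hcp] at haev
  simpa using haev

/-- **Values of symmetric matrices under real valuations.**  Let `v` be a
valuation (written multiplicatively) on a field `K` with formally real residue
field, and `M` a nonzero symmetric `n×n` matrix over `K` with characteristic
polynomial `tⁿ + a_{n-1}t^{n-1} + ⋯ + a₀`.  Then the maximal value `v(M)` of the
entries of `M` satisfies `v(aᵢ) ≤ v(M)^(n-i)` for all `i < n`, with equality for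
some `i < n` (multiplicative form of
`v(M) = min_{0 ≤ i < n} v(aᵢ)/(n-i)`). -/
theorem valuation_of_symmetric_matrix_eq_min_of_charpoly
    {K Γ₀ : Type} [Field K] [LinearOrderedCommGroupWithZero Γ₀]
    (v : Valuation K Γ₀)
    (hres : ¬ IsSumSq (-1 : IsLocalRing.ResidueField v.valuationSubring))
    {n : ℕ} (M : Matrix (Fin n) (Fin n) K) (hsymm : M.IsSymm) (hM : M ≠ 0) :
    ∃ p : Fin n × Fin n,
      (∀ q : Fin n × Fin n, v (M q.1 q.2) ≤ v (M p.1 p.2)) ∧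
      (∀ i : Fin n, v (M.charpoly.coeff i) ≤ v (M p.1 p.2) ^ (n - (i : ℕ))) ∧
      ∃ i : Fin n, v (M.charpoly.coeff i) = v (M p.1 p.2) ^ (n - (i : ℕ)) := by
  classical
  rcases Nat.eq_zero_or_pos n with hn | hn
  · subst hn
    exact absurd (by ext i; exact i.elim0) hM
  haveI : Nonempty (Fin n) := Fin.pos_iff_nonempty.mp hn
  obtain ⟨p, hp⟩ := Finite.exists_max (fun q : Fin n × Fin n => v (M q.1 q.2))
  set c := M p.1 p.2 with hcdef
  have hc0 : c ≠ 0 := by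
    obtain ⟨q1, q2, hq⟩ : ∃ i j, M i j ≠ 0 := by
      by_contra h
      push_neg at h
      exact hM (by ext i j; simp [h])
    intro h
    have hle := hp (q1, q2)
    rw [h, map_zero] at hle
    exact hq (v.zero_iff.mp (le_antisymm hle zero_le'))
  have hvc : v c ≠ 0 := v.ne_zero_iff.mpr hc0
  set O := v.valuationSubring with hO
  have hOint : v.Integers O :=
    ⟨Subtype.coe_injective, fun x => x.2, fun r hr => ⟨⟨r, hr⟩, rfl⟩⟩
  have hmem : ∀ i j, c⁻¹ * M i j ∈ O := by
    intro i j
    rw [hO, Valuation.mem_valuationSubring_iff, _root_.map_mul, map_inv₀]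
    calc (v c)⁻¹ * v (M i j) ≤ (v c)⁻¹ * v c := mul_le_mul_right (hp (i, j)) _
    _ = 1 := inv_mul_cancel₀ hvc
  set N' : Matrix (Fin n) (Fin n) O := fun i j => ⟨c⁻¹ * M i j, hmem i j⟩ with hN'
  have hNmap : N'.map (algebraMap O K) = c⁻¹ • M := by
    ext i j
    rfl
  have hchar : (c⁻¹ • M).charpoly = N'.charpoly.map (algebraMap O K) := by
    rw [← hNmap, Matrix.charpoly_map]
  have hcoeffM : ∀ i : ℕ, i ≤ n →
      M.charpoly.coeff i = c ^ (n - i) * algebraMap O K (N'.charpoly.coeff i) := by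
    intro i hi
    conv_lhs => rw [(smul_inv_smul₀ hc0 M).symm]
    rw [aux_charpoly_smul_coeff _ c hc0 i hi, hchar, Polynomial.coeff_map]
  have hval : ∀ i : ℕ, i ≤ n →
      v (M.charpoly.coeff i) = v c ^ (n - i) * v (algebraMap O K (N'.charpoly.coeff i)) := by
    intro i hi
    rw [hcoeffM i hi, _root_.map_mul, _root_.map_pow]
  refine ⟨p, fun q => hp q, ?_, ?_⟩
  · intro i
    rw [hval i (le_of_lt i.2)]
    exact mul_le_of_le_one_right' (hOint.map_le_one _)
  · set A : Matrix (Fin n) (Fin n) (IsLocalRing.ResidueField O) :=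
      N'.map (IsLocalRing.residue O) with hA
    have hAsymm : A.IsSymm := by
      apply Matrix.IsSymm.ext
      intro i j
      rw [hA]
      simp only [Matrix.map_apply]
      congr 1
      exact Subtype.ext (by show c⁻¹ * M j i = c⁻¹ * M i j; rw [hsymm.apply i j])
    have hA0 : A ≠ 0 := by
      intro h
      have h1 : A p.1 p.2 = 1 := by
        have hN1 : N' p.1 p.2 = 1 :=
          Subtype.ext (by show c⁻¹ * c = 1; exact inv_mul_cancel₀ hc0)
        rw [hA, Matrix.map_apply, hN1, _root_.map_one]
      rw [h] at h1
      simp at h1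
    obtain ⟨i, hilt, hi0⟩ := aux_exists_coeff hres hAsymm hA0
    have hmapchar : A.charpoly = N'.charpoly.map (IsLocalRing.residue O) :=
      Matrix.charpoly_map _ _
    rw [hmapchar, Polynomial.coeff_map] at hi0
    have hunit : IsUnit (N'.charpoly.coeff i) :=
      (IsLocalRing.residue_ne_zero_iff_isUnit _).mp hi0
    have hv1 : v (algebraMap O K (N'.charpoly.coeff i)) = 1 := hOint.one_of_isUnit hunit
    refine ⟨⟨i, hilt⟩, ?_⟩
    rw [show ((⟨i, hilt⟩ : Fin n) : ℕ) = i from rfl, hval i (le_of_lt hilt), hv1, mul_one]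
end
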